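/- arXiv:1707.09171 — 3 statements merged into one kernel-verified Lean document; each statement's English description precedes it below -/
import Mathlib

section
/- Let X be a two-dimensional real normed space with unit sphere S satisfying, for some 0 < ρ < 1, property (P-ρS). Then the map u ↦ u*, where u* is the unique point of S with u ≺ u* such that [u, u*] supports ρS, is a homeomorphism of S onto S, and it preserves the cyclic order: if u ≺ v then u* ≺ v*. -/
open Real Set

/-- `N` is a norm on the two-dimensional real vector space `ℝ × ℝ`. -/
def IsNorm (N : ℝ × ℝ → ℝ) : Prop :=
  (∀ x, N x = 0 ↔ x = 0) ∧ (∀ (a : ℝ) (x : ℝ × ℝ), N (a • x) = |a| * N x) ∧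
    ∀ x y, N (x + y) ≤ N x + N y

/-- The 2D cross product `u ∧ v`; `u ≺ v` means `0 < wedge u v`. -/
def wedge (u v : ℝ × ℝ) : ℝ := u.1 * v.2 - u.2 * v.1

/-- `inf_{t ∈ [0,1]} N ((1−t)u + tv)`, the minimal `N`-norm on the segment `[u,v]`. -/
noncomputable def segInf (N : ℝ × ℝ → ℝ) (u v : ℝ × ℝ) : ℝ :=
  sInf ((fun t : ℝ => N ((1 - t) • u + t • v)) '' Icc (0:ℝ) 1)

/-- Property (P-ρS): every chord of the unit sphere of `N` that supports `ρS`
touches `ρS` at its midpoint. -/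
def PropP (N : ℝ × ℝ → ℝ) (ρ : ℝ) : Prop :=
  ∀ u v : ℝ × ℝ, N u = 1 → N v = 1 → segInf N u v = ρ →
    N ((1/2 : ℝ) • u + (1/2 : ℝ) • v) = ρ

section Aux
variable {N : ℝ × ℝ → ℝ}

lemma IsNorm.zero (hN : IsNorm N) : N 0 = 0 := (hN.1 0).2 rfl

lemma IsNorm.neg (hN : IsNorm N) (x : ℝ × ℝ) : N (-x) = N x := by
  have := hN.2.1 (-1) x
  simpa using this

lemma IsNorm.nonneg (hN : IsNorm N) (x : ℝ × ℝ) : 0 ≤ N x := by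
  have h := hN.2.2 x (-x)
  rw [add_neg_cancel, hN.zero, hN.neg] at h
  linarith

lemma IsNorm.pos (hN : IsNorm N) {x : ℝ × ℝ} (hx : x ≠ 0) : 0 < N x := by
  rcases lt_or_eq_of_le (hN.nonneg x) with h | h
  · exact h
  · exact absurd ((hN.1 x).1 h.symm) hx

lemma IsNorm.sub_le (hN : IsNorm N) (x y : ℝ × ℝ) : N x - N y ≤ N (x - y) := by
  have h := hN.2.2 y (x - y)
  rw [add_sub_cancel] at h
  linarith

lemma IsNorm.abs_sub_le (hN : IsNorm N) (x y : ℝ × ℝ) : |N x - N y| ≤ N (x - y) := by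
  rw [abs_sub_le_iff]
  refine ⟨hN.sub_le x y, ?_⟩
  have := hN.sub_le y x
  rw [show y - x = -(x - y) by ring, hN.neg] at this
  linarith

lemma IsNorm.le_basis (hN : IsNorm N) (x : ℝ × ℝ) :
    N x ≤ N (1,0) * |x.1| + N (0,1) * |x.2| := by
  have hx : x = x.1 • ((1:ℝ),(0:ℝ)) + x.2 • ((0:ℝ),(1:ℝ)) := by
    simp [Prod.ext_iff]
  calc N x ≤ N (x.1 • ((1:ℝ),(0:ℝ))) + N (x.2 • ((0:ℝ),(1:ℝ))) := by
        nth_rewrite 1 [hx]; exact hN.2.2 _ _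
    _ = N (1,0) * |x.1| + N (0,1) * |x.2| := by rw [hN.2.1, hN.2.1]; ring

lemma IsNorm.continuous (hN : IsNorm N) : Continuous N := by
  have key : ∀ x y : ℝ × ℝ, dist (N x) (N y) ≤ (N (1,0) + N (0,1) + 1) * dist x y := by
    intro x y
    rw [Real.dist_eq]
    refine le_trans (hN.abs_sub_le x y) (le_trans (hN.le_basis _) ?_)
    have h1 : |(x - y).1| ≤ dist x y := by
      rw [Prod.dist_eq]
      simpa [Real.dist_eq] using le_max_left (dist x.1 y.1) (dist x.2 y.2)
    have h2 : |(x - y).2| ≤ dist x y := by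
      rw [Prod.dist_eq]
      simpa [Real.dist_eq] using le_max_right (dist x.1 y.1) (dist x.2 y.2)
    have e1 := hN.nonneg (1,0)
    have e2 := hN.nonneg (0,1)
    have hd : (0:ℝ) ≤ dist x y := dist_nonneg
    nlinarith
  rw [Metric.continuous_iff]
  intro b ε hε
  have e1 := hN.nonneg (1,0)
  have e2 := hN.nonneg (0,1)
  have hC : (0:ℝ) < N (1,0) + N (0,1) + 1 := by linarith
  refine ⟨ε / (N (1,0) + N (0,1) + 1), by positivity, fun a ha => ?_⟩
  have := key a b
  calc dist (N a) (N b) ≤ (N (1,0) + N (0,1) + 1) * dist a b := this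
    _ < (N (1,0) + N (0,1) + 1) * (ε / (N (1,0) + N (0,1) + 1)) := by
        exact (mul_lt_mul_iff_right₀ hC).2 ha
    _ = ε := by field_simp

end Aux
section Aux2
variable {N : ℝ × ℝ → ℝ}

lemma segInf_bddBelow (hN : IsNorm N) (u v : ℝ × ℝ) :
    BddBelow ((fun t : ℝ => N ((1 - t) • u + t • v)) '' Icc (0:ℝ) 1) :=
  ⟨0, fun _ ⟨t, _, ht⟩ => ht ▸ hN.nonneg _⟩

lemma segInf_le (hN : IsNorm N) (u v : ℝ × ℝ) {t : ℝ} (ht : t ∈ Icc (0:ℝ) 1) :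
    segInf N u v ≤ N ((1 - t) • u + t • v) :=
  csInf_le (segInf_bddBelow hN u v) (mem_image_of_mem _ ht)

lemma segInf_attain (hN : IsNorm N) (u v : ℝ × ℝ) :
    ∃ t ∈ Icc (0:ℝ) 1, N ((1 - t) • u + t • v) = segInf N u v := by
  have hc : ContinuousOn (fun t : ℝ => N ((1 - t) • u + t • v)) (Icc 0 1) :=
    (hN.continuous.comp (by continuity)).continuousOn
  have hK : IsCompact ((fun t : ℝ => N ((1 - t) • u + t • v)) '' Icc (0:ℝ) 1) :=
    isCompact_Icc.image_of_continuousOn hc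
  have hne : ((fun t : ℝ => N ((1 - t) • u + t • v)) '' Icc (0:ℝ) 1).Nonempty :=
    (nonempty_Icc.2 zero_le_one).image _
  have := hK.sInf_mem hne
  obtain ⟨t, ht, h⟩ := this
  exact ⟨t, ht, h⟩

lemma segInf_nonneg (hN : IsNorm N) (u v : ℝ × ℝ) : 0 ≤ segInf N u v := by
  obtain ⟨t, ht, h⟩ := segInf_attain hN u v
  rw [← h]; exact hN.nonneg _

lemma segInf_neg (hN : IsNorm N) (u v : ℝ × ℝ) : segInf N (-u) (-v) = segInf N u v := by
  unfold segInf
  congr 1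
  ext y
  constructor <;> rintro ⟨t, ht, rfl⟩ <;> refine ⟨t, ht, ?_⟩
  · show N ((1 - t) • u + t • v) = N ((1 - t) • (-u) + t • (-v))
    rw [show (1 - t) • (-u) + t • (-v) = -((1-t) • u + t • v) by module, hN.neg]
  · show N ((1 - t) • (-u) + t • (-v)) = N ((1 - t) • u + t • v)
    rw [show (1 - t) • (-u) + t • (-v) = -((1-t) • u + t • v) by module, hN.neg]

lemma segInf_self (hN : IsNorm N) (u : ℝ × ℝ) : segInf N u u = N u := by
  unfold segInf
  have : ∀ t : ℝ, (1 - t) • u + t • u = u := fun t => by module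
  simp only [this]
  have himg : (fun _ : ℝ => N u) '' Icc (0:ℝ) 1 = {N u} :=
    (Set.Nonempty.image_const (nonempty_Icc.2 (zero_le_one (α := ℝ))) _)
  rw [himg]
  exact csInf_singleton _

lemma segInf_neg_self (hN : IsNorm N) (u : ℝ × ℝ) : segInf N u (-u) = 0 := by
  refine le_antisymm ?_ (segInf_nonneg hN u (-u))
  have h := segInf_le hN u (-u) (t := 1/2) (by norm_num)
  rw [show (1 - 1/2 : ℝ) • u + (1/2 : ℝ) • (-u) = 0 by module, hN.zero] at h
  exact h

lemma segInf_dist (hN : IsNorm N) (u v u' v' : ℝ × ℝ) :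
    segInf N u v ≤ segInf N u' v' + (N (u - u') + N (v - v')) := by
  obtain ⟨t, ht, hattn⟩ := segInf_attain hN u' v'
  have h1 : segInf N u v ≤ N ((1 - t) • u + t • v) := segInf_le hN u v ht
  have h2 : N ((1 - t) • u + t • v) ≤ N ((1 - t) • u' + t • v')
      + N ((1 - t) • (u - u') + t • (v - v')) := by
    have := hN.2.2 ((1 - t) • u' + t • v') ((1 - t) • (u - u') + t • (v - v'))
    rw [show (1 - t) • u' + t • v' + ((1 - t) • (u - u') + t • (v - v'))
        = (1 - t) • u + t • v by module] at this
    exact this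
  have h3 : N ((1 - t) • (u - u') + t • (v - v')) ≤ N (u - u') + N (v - v') := by
    refine le_trans (hN.2.2 _ _) ?_
    rw [hN.2.1, hN.2.1]
    have n1 := hN.nonneg (u - u')
    have n2 := hN.nonneg (v - v')
    have h1t : |1 - t| = 1 - t := abs_of_nonneg (by linarith [ht.2])
    have h2t : |t| = t := abs_of_nonneg ht.1
    rw [h1t, h2t]
    nlinarith [ht.1, ht.2]
  linarith [hattn ▸ h2]

lemma segInf_abs_sub (hN : IsNorm N) (u v u' v' : ℝ × ℝ) :
    |segInf N u v - segInf N u' v'| ≤ N (u - u') + N (v - v') := by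
  rw [abs_sub_le_iff]
  constructor
  · linarith [segInf_dist hN u v u' v']
  · have := segInf_dist hN u' v' u v
    rw [show u' - u = -(u - u') by ring, show v' - v = -(v - v') by ring, hN.neg, hN.neg] at this
    linarith

-- wedge algebra
lemma wedge_swap (u v : ℝ × ℝ) : wedge u v = - wedge v u := by unfold wedge; ring
lemma wedge_self (u : ℝ × ℝ) : wedge u u = 0 := by unfold wedge; ring
lemma wedge_neg_left (u v : ℝ × ℝ) : wedge (-u) v = - wedge u v := by
  unfold wedge; simp; ring
lemma wedge_neg_right (u v : ℝ × ℝ) : wedge u (-v) = - wedge u v := by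
  unfold wedge; simp; ring
lemma wedge_smul_left (a : ℝ) (u v : ℝ × ℝ) : wedge (a • u) v = a * wedge u v := by
  unfold wedge; simp [Prod.smul_fst, Prod.smul_snd]; ring
lemma wedge_smul_right (a : ℝ) (u v : ℝ × ℝ) : wedge u (a • v) = a * wedge u v := by
  unfold wedge; simp [Prod.smul_fst, Prod.smul_snd]; ring

lemma pluecker (u v w x : ℝ × ℝ) :
    wedge u v * wedge w x = wedge u w * wedge v x - wedge u x * wedge v w := by
  unfold wedge; ring

lemma wedge_rep (u w x : ℝ × ℝ) :
    wedge u w • x = wedge x w • u + wedge u x • w := by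
  unfold wedge
  refine Prod.ext ?_ ?_ <;> simp [Prod.smul_fst, Prod.smul_snd] <;> ring

lemma wedge_eq_zero_unit (hN : IsNorm N) {x y : ℝ × ℝ} (hx : N x = 1) (hy : N y = 1)
    (h : wedge x y = 0) : y = x ∨ y = -x := by
  have hx0 : x ≠ 0 := fun h0 => by simp [h0, hN.zero] at hx
  have hdep : ∃ c : ℝ, y = c • x := by
    by_cases h1 : x.1 ≠ 0
    · refine ⟨y.1 / x.1, Prod.ext (by simp only [Prod.smul_fst, smul_eq_mul]; field_simp) ?_⟩
      have : x.1 * y.2 = x.2 * y.1 := by unfold wedge at h; linarith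
      simp only [Prod.smul_snd, smul_eq_mul]
      field_simp
      linarith [this]
    · push_neg at h1
      have h2 : x.2 ≠ 0 := fun h2 => hx0 (Prod.ext h1 h2)
      refine ⟨y.2 / x.2, Prod.ext ?_ (by simp only [Prod.smul_snd, smul_eq_mul]; field_simp)⟩
      have : x.1 * y.2 = x.2 * y.1 := by unfold wedge at h; linarith
      simp only [Prod.smul_fst, smul_eq_mul]
      rw [h1] at this
      have this' : x.2 * y.1 = 0 := by linarith
      have hy1 : y.1 = 0 := by
        rcases mul_eq_zero.1 this' with h | h
        · exact absurd h h2
        · exact h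
      simp [hy1, h1]
  obtain ⟨c, rfl⟩ := hdep
  rw [hN.2.1, hx, mul_one] at hy
  rcases (abs_eq zero_le_one).1 hy with h | h
  · exact Or.inl (by rw [h, one_smul])
  · exact Or.inr (by rw [h, neg_one_smul])

end Aux2
section Geo
variable {N : ℝ × ℝ → ℝ} {ρ : ℝ}

lemma wedge_eq_zero_dep {x y : ℝ × ℝ} (hx : x ≠ 0) (h : wedge x y = 0) :
    ∃ c : ℝ, y = c • x := by
  by_cases h1 : x.1 ≠ 0
  · refine ⟨y.1 / x.1, Prod.ext (by simp only [Prod.smul_fst, smul_eq_mul]; field_simp) ?_⟩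
    have hh : x.1 * y.2 = x.2 * y.1 := by unfold wedge at h; linarith
    simp only [Prod.smul_snd, smul_eq_mul]
    field_simp
    linarith [hh]
  · push_neg at h1
    have h2 : x.2 ≠ 0 := fun h2 => hx (Prod.ext h1 h2)
    refine ⟨y.2 / x.2, Prod.ext ?_ (by simp only [Prod.smul_snd, smul_eq_mul]; field_simp)⟩
    have hh : x.1 * y.2 = x.2 * y.1 := by unfold wedge at h; linarith
    rw [h1] at hh
    have hh' : x.2 * y.1 = 0 := by linarith
    have hy1 : y.1 = 0 := by
      rcases mul_eq_zero.1 hh' with h | h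
      · exact absurd h h2
      · exact h
    simp [hy1, h1]

lemma wedge_comb (a x y : ℝ × ℝ) (s t : ℝ) :
    wedge a (s • x + t • y) = s * wedge a x + t * wedge a y := by
  unfold wedge; simp [Prod.smul_fst, Prod.smul_snd]; ring

lemma wedge_sub_right (a x y : ℝ × ℝ) : wedge a (x - y) = wedge a x - wedge a y := by
  unfold wedge
  simp only [Prod.fst_sub, Prod.snd_sub]
  ring

lemma IsNorm.comb_le {N : ℝ × ℝ → ℝ} (hN : IsNorm N) {a b : ℝ} (x y : ℝ × ℝ)
    (ha : 0 ≤ a) (hb : 0 ≤ b) : N (a • x + b • y) ≤ a * N x + b * N y := by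
  refine le_trans (hN.2.2 _ _) ?_
  rw [hN.2.1, hN.2.1, abs_of_nonneg ha, abs_of_nonneg hb]

/-- Separation: every point of the ball `ρB` is on the `0`-side of the line
through a chord `[u,w]` of `S` supporting `ρS`. -/
lemma separation (hN : IsNorm N) (hρ0 : 0 < ρ) (hρ1 : ρ < 1) {u w : ℝ × ℝ}
    (hu : N u = 1) (hw : N w = 1) (huw : 0 < wedge u w) (hseg : segInf N u w = ρ)
    {z : ℝ × ℝ} (hz : N z ≤ ρ) : 0 ≤ wedge (w - u) (z - u) := by
  by_contra hs
  push_neg at hs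
  have hLu : wedge (w - u) u = - wedge u w := by
    unfold wedge; simp only [Prod.fst_sub, Prod.snd_sub]; ring
  have hcneg : wedge (w - u) u < 0 := by rw [hLu]; linarith
  have hLz0 : wedge (w - u) z < wedge (w - u) u := by
    have := wedge_sub_right (w - u) z u
    linarith
  have hLzneg : wedge (w - u) z < 0 := lt_trans hLz0 hcneg
  obtain ⟨μ, hμ⟩ : ∃ μ : ℝ, μ = wedge (w - u) u / wedge (w - u) z := ⟨_, rfl⟩
  have hμ0 : 0 < μ := hμ ▸ div_pos_of_neg_of_neg hcneg hLzneg
  have hμ1 : μ < 1 := by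
    rw [hμ, div_lt_one_of_neg hLzneg]; exact hLz0
  obtain ⟨p, hp⟩ : ∃ p : ℝ × ℝ, p = μ • z := ⟨_, rfl⟩
  have hLp : wedge (w - u) p = wedge (w - u) u := by
    rw [hp, wedge_smul_right, hμ, div_mul_cancel₀ _ (ne_of_lt hLzneg)]
  have hNp : N p < ρ := by
    rw [hp, hN.2.1, abs_of_pos hμ0]
    calc μ * N z ≤ μ * ρ := by nlinarith [hN.nonneg z]
      _ < ρ := by nlinarith
  have hwu : w - u ≠ 0 := by
    intro h0
    rw [sub_eq_zero.1 h0, wedge_self] at huw; linarith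
  obtain ⟨r, hr⟩ : ∃ r : ℝ, p - u = r • (w - u) := by
    apply wedge_eq_zero_dep hwu
    rw [wedge_sub_right, hLp, sub_self]
  have hpr : p = (1 - r) • u + r • w := by
    have : p = u + r • (w - u) := by rw [← hr]; module
    rw [this]; module
  by_cases hr1 : r ∈ Icc (0:ℝ) 1
  · have := segInf_le hN u w hr1
    rw [hseg, ← hpr] at this
    linarith
  · simp only [mem_Icc, not_and_or, not_le] at hr1
    rcases hr1 with hr0 | hr2
    · have hden : (0:ℝ) < 1 - r := by linarith
      have hcomb : u = (1/(1-r)) • p + (-r/(1-r)) • w := by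
        rw [hpr]; match_scalars <;> field_simp <;> ring
      have hNu : N u ≤ (1/(1-r)) * N p + (-r/(1-r)) * N w := by
        nth_rewrite 1 [hcomb]
        exact hN.comb_le _ _ (by positivity) (by apply div_nonneg <;> linarith)
      rw [hu, hw] at hNu
      have h1r : 1/(1-r) + (-r/(1-r)) = 1 := by field_simp; ring
      nlinarith [div_pos one_pos hden]
    · have hrpos : (0:ℝ) < r := by linarith
      have hcomb : w = (1/r) • p + (1 - 1/r) • u := by
        rw [hpr]; match_scalars <;> field_simp <;> ring
      have hNw : N w ≤ (1/r) * N p + (1 - 1/r) * N u := by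
        nth_rewrite 1 [hcomb]
        refine hN.comb_le _ _ (by positivity) ?_
        rw [sub_nonneg, div_le_one hrpos]; linarith
      rw [hu, hw] at hNw
      have : (0:ℝ) < 1/r := by positivity
      nlinarith

/-- Interior points of a chord supporting `ρS` have norm `< 1`. -/
lemma interior_lt (hN : IsNorm N) (hρ1 : ρ < 1) {u w : ℝ × ℝ}
    (hu : N u = 1) (hw : N w = 1) (hseg : segInf N u w = ρ)
    {t : ℝ} (ht : t ∈ Ioo (0:ℝ) 1) : N ((1 - t) • u + t • w) < 1 := by
  obtain ⟨t0, ht0, hm⟩ := segInf_attain hN u w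
  rw [hseg] at hm
  set m := (1 - t0) • u + t0 • w with hmdef
  rcases lt_trichotomy t t0 with hlt | heq | hgt
  · have ht00 : 0 < t0 := lt_trans ht.1 hlt
    set α := 1 - t/t0 with hα
    have hα0 : 0 < α := by
      rw [hα, sub_pos, div_lt_one ht00]; exact hlt
    have hα1 : α < 1 := by
      rw [hα]
      have : 0 < t/t0 := div_pos ht.1 ht00
      linarith
    have hcomb : (1 - t) • u + t • w = α • u + (1 - α) • m := by
      rw [hmdef, hα]
      match_scalars <;> field_simp <;> ring
    rw [hcomb]
    calc N (α • u + (1 - α) • m) ≤ α * N u + (1 - α) * N m :=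
          hN.comb_le _ _ (le_of_lt hα0) (by linarith)
      _ = α + (1 - α) * ρ := by rw [hu, hm]; ring
      _ < 1 := by nlinarith
  · rw [heq, hm]; linarith
  · have ht01 : t0 < 1 := lt_trans hgt ht.2
    set β := (t - t0)/(1 - t0) with hβ
    have hd : (0:ℝ) < 1 - t0 := by linarith
    have hβ0 : 0 < β := div_pos (by linarith) hd
    have hβ1 : β < 1 := by
      rw [hβ, div_lt_one hd]; linarith [ht.2]
    have hcomb : (1 - t) • u + t • w = β • w + (1 - β) • m := by
      rw [hmdef, hβ]
      match_scalars <;> field_simp <;> ring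
    rw [hcomb]
    calc N (β • w + (1 - β) • m) ≤ β * N w + (1 - β) * N m :=
          hN.comb_le _ _ (le_of_lt hβ0) (by linarith)
      _ = β + (1 - β) * ρ := by rw [hw, hm]; ring
      _ < 1 := by nlinarith
end Geo
section Geo2
variable {N : ℝ × ℝ → ℝ} {ρ : ℝ}

/-- Arc lemma: a point of `S` strictly between `u` and `w` in the cyclic order lies
strictly on the far side of the chord `[u,w]` (when the chord supports `ρS`). -/
lemma arc_side (hN : IsNorm N) (hρ0 : 0 < ρ) (hρ1 : ρ < 1) {u w x : ℝ × ℝ}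
    (hu : N u = 1) (hw : N w = 1) (hx : N x = 1) (huw : 0 < wedge u w)
    (hseg : segInf N u w = ρ) (hux : 0 < wedge u x) (hxw : 0 < wedge x w) :
    wedge (w - u) (x - u) < 0 := by
  obtain ⟨c1, hc1⟩ : ∃ c : ℝ, c = wedge x w / wedge u w := ⟨_, rfl⟩
  obtain ⟨c2, hc2⟩ : ∃ c : ℝ, c = wedge u x / wedge u w := ⟨_, rfl⟩
  have hc10 : 0 < c1 := hc1 ▸ div_pos hxw huw
  have hc20 : 0 < c2 := hc2 ▸ div_pos hux huw
  have hrep : x = c1 • u + c2 • w := by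
    have h := wedge_rep u w x
    have h2 := congrArg (fun y => (wedge u w)⁻¹ • y) h
    simp only [smul_smul, smul_add] at h2
    rw [inv_mul_cancel₀ (ne_of_gt huw), one_smul] at h2
    rw [h2, hc1, hc2]
    match_scalars <;> field_simp <;> ring
  -- c1 + c2 ≥ 1
  have hsum : 1 ≤ c1 + c2 := by
    by_contra hlt
    push_neg at hlt
    have hNx : N x ≤ c1 * N u + c2 * N w := by
      nth_rewrite 1 [hrep]
      exact hN.comb_le _ _ (le_of_lt hc10) (le_of_lt hc20)
    rw [hu, hw, hx] at hNx
    linarith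
  -- the value of the side functional
  have hval : wedge (w - u) (x - u) = -(c1 + c2 - 1) * wedge u w := by
    rw [hrep]
    unfold wedge
    simp only [Prod.fst_sub, Prod.snd_sub, Prod.fst_add, Prod.snd_add,
      Prod.smul_fst, Prod.smul_snd, smul_eq_mul]
    ring
  rcases lt_or_eq_of_le hsum with hgt | heq
  · rw [hval]; nlinarith
  · -- x is an interior point of the chord, so N x < 1, contradiction
    exfalso
    have hx_int : x = (1 - c2) • u + c2 • w := by
      rw [hrep, show c1 = 1 - c2 by linarith]
    have := interior_lt hN hρ1 hu hw hseg (t := c2) ⟨hc20, by linarith⟩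
    rw [← hx_int, hx] at this
    linarith

/-- The nesting lemma: two supporting chords cannot be strictly nested. -/
lemma nest (hN : IsNorm N) (hρ0 : 0 < ρ) (hρ1 : ρ < 1) (hP : PropP N ρ)
    {u v w1 w2 : ℝ × ℝ} (hu : N u = 1) (hv : N v = 1) (hw1 : N w1 = 1) (hw2 : N w2 = 1)
    (h1 : segInf N u w1 = ρ) (h2 : segInf N v w2 = ρ)
    (huw1 : 0 < wedge u w1) (hvw2 : 0 < wedge v w2) (huv : 0 < wedge u v)
    (hvw1 : 0 < wedge v w1) (huw2 : 0 < wedge u w2) (hw21 : 0 ≤ wedge w2 w1) : False := by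
  have hsv : wedge (w1 - u) (v - u) < 0 :=
    arc_side hN hρ0 hρ1 hu hw1 hv huw1 h1 huv hvw1
  rcases lt_or_eq_of_le hw21 with hgt | heq
  · -- w2 strictly inside the arc as well
    have hsw2 : wedge (w1 - u) (w2 - u) < 0 :=
      arc_side hN hρ0 hρ1 hu hw1 hw2 huw1 h1 huw2 hgt
    obtain ⟨t, ht, hq⟩ := segInf_attain hN v w2
    rw [h2] at hq
    have hcomb : (1 - t) • v + t • w2 - u = (1 - t) • (v - u) + t • (w2 - u) := by
      module
    have hsep := separation hN hρ0 hρ1 hu hw1 huw1 h1 (z := (1 - t) • v + t • w2)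
      (le_of_eq hq)
    rw [hcomb, wedge_comb] at hsep
    rcases eq_or_lt_of_le ht.2 with hteq | htlt
    · subst hteq; simp at hsep; linarith
    · have e1 : (1 - t) * wedge (w1 - u) (v - u) < 0 :=
        mul_neg_of_pos_of_neg (by linarith) hsv
      have e2 : t * wedge (w1 - u) (w2 - u) ≤ 0 :=
        mul_nonpos_of_nonneg_of_nonpos ht.1 (le_of_lt hsw2)
      linarith
  · -- wedge w2 w1 = 0 : w2 = ±w1
    rcases wedge_eq_zero_unit hN hw2 hw1 heq.symm with hww | hww
    · -- w1 = w2 : both chords end at the same point; use property P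
      rw [← hww] at h2 hvw2
      have hm := hP v w1 hv hw1 h2
      have hsep := separation hN hρ0 hρ1 hu hw1 huw1 h1
        (z := (1/2 : ℝ) • v + (1/2 : ℝ) • w1) (le_of_eq hm)
      have hcomb : (1/2 : ℝ) • v + (1/2 : ℝ) • w1 - u
          = (1/2 : ℝ) • (v - u) + (1/2 : ℝ) • (w1 - u) := by module
      rw [hcomb, wedge_comb, wedge_self] at hsep
      linarith
    · -- w1 = -w2
      rw [hww, wedge_neg_right] at hvw1
      linarith

/-- Order preservation for supporting chords. -/
lemma order_pres (hN : IsNorm N) (hρ0 : 0 < ρ) (hρ1 : ρ < 1) (hP : PropP N ρ)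
    {u v w1 w2 : ℝ × ℝ} (hu : N u = 1) (hv : N v = 1) (hw1 : N w1 = 1) (hw2 : N w2 = 1)
    (h1 : segInf N u w1 = ρ) (h2 : segInf N v w2 = ρ)
    (huw1 : 0 < wedge u w1) (hvw2 : 0 < wedge v w2) (huv : 0 < wedge u v) :
    0 < wedge w1 w2 := by
  by_contra hcon
  push_neg at hcon
  have hw21 : 0 ≤ wedge w2 w1 := by rw [wedge_swap w2 w1]; linarith
  by_cases hd : 0 < wedge v w1
  · by_cases he : 0 < wedge u w2
    · exact nest hN hρ0 hρ1 hP hu hv hw1 hw2 h1 h2 huw1 hvw2 huv hd he hw21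
    · push_neg at he
      have hpl := pluecker u v w2 w1
      nlinarith [mul_pos huw1 hvw2, mul_nonneg (le_of_lt huv) hw21]
  · push_neg at hd
    by_cases he : wedge u w2 < 0
    · rcases lt_or_eq_of_le hd with hd' | hd'
      · -- both negative: apply nest to the flipped configuration
        refine nest hN hρ0 hρ1 hP (u := v) (v := -u) (w1 := w2) (w2 := -w1)
          hv (by rw [hN.neg]; exact hu) hw2 (by rw [hN.neg]; exact hw1)
          h2 (by rw [segInf_neg hN]; exact h1)
          hvw2 (by rw [wedge_neg_left, wedge_neg_right, neg_neg]; exact huw1)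
          (by rw [wedge_neg_right]; rw [wedge_swap] at huv; linarith)
          (by rw [wedge_neg_left]; linarith)
          (by rw [wedge_neg_right]; linarith)
          (by rw [wedge_neg_left]; rw [wedge_swap] at hw21; linarith)
      · -- wedge v w1 = 0
        have hpl := pluecker u v w2 w1
        nlinarith [mul_pos huw1 hvw2, mul_nonneg (le_of_lt huv) hw21]
    · push_neg at he
      have hpl := pluecker u v w2 w1
      nlinarith [mul_pos huw1 hvw2, mul_nonneg (le_of_lt huv) hw21]

end Geo2
section Topo
variable {N : ℝ × ℝ → ℝ} {ρ : ℝ}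

lemma IsNorm.continuous_of (hN : IsNorm N) {g : ℝ × ℝ → ℝ}
    (hg : ∀ x y : ℝ × ℝ, |g x - g y| ≤ N (x - y)) : Continuous g := by
  have key : ∀ x y : ℝ × ℝ, dist (g x) (g y) ≤ (N (1,0) + N (0,1) + 1) * dist x y := by
    intro x y
    rw [Real.dist_eq]
    refine le_trans (hg x y) (le_trans (hN.le_basis _) ?_)
    have h1 : |(x - y).1| ≤ dist x y := by
      rw [Prod.dist_eq]
      simpa [Real.dist_eq] using le_max_left (dist x.1 y.1) (dist x.2 y.2)
    have h2 : |(x - y).2| ≤ dist x y := by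
      rw [Prod.dist_eq]
      simpa [Real.dist_eq] using le_max_right (dist x.1 y.1) (dist x.2 y.2)
    have e1 := hN.nonneg (1,0)
    have e2 := hN.nonneg (0,1)
    have hd : (0:ℝ) ≤ dist x y := dist_nonneg
    nlinarith
  rw [Metric.continuous_iff]
  intro b ε hε
  have e1 := hN.nonneg (1,0)
  have e2 := hN.nonneg (0,1)
  have hC : (0:ℝ) < N (1,0) + N (0,1) + 1 := by linarith
  refine ⟨ε / (N (1,0) + N (0,1) + 1), by positivity, fun a ha => ?_⟩
  calc dist (g a) (g b) ≤ (N (1,0) + N (0,1) + 1) * dist a b := key a b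
    _ < (N (1,0) + N (0,1) + 1) * (ε / (N (1,0) + N (0,1) + 1)) := (mul_lt_mul_iff_right₀ hC).2 ha
    _ = ε := by field_simp

lemma IsNorm.lower (hN : IsNorm N) : ∃ m : ℝ, 0 < m ∧ ∀ x : ℝ × ℝ, m * ‖x‖ ≤ N x := by
  have hone : ((1:ℝ),(0:ℝ)) ∈ Metric.sphere (0 : ℝ × ℝ) 1 := by
    simp [Prod.norm_def]
  obtain ⟨x₀, hx₀, hmin'⟩ := (isCompact_sphere (0 : ℝ × ℝ) 1).exists_isMinOn
    ⟨_, hone⟩ hN.continuous.continuousOn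
  have hmin : ∀ y ∈ Metric.sphere (0 : ℝ × ℝ) 1, N x₀ ≤ N y := fun y hy => hmin' hy
  have hx₀n : ‖x₀‖ = 1 := by simpa using hx₀
  have hx₀0 : x₀ ≠ 0 := fun h => by simp [h] at hx₀n
  refine ⟨N x₀, hN.pos hx₀0, fun x => ?_⟩
  by_cases hx : x = 0
  · simp [hx, hN.zero]
  · have hnx : (0:ℝ) < ‖x‖ := norm_pos_iff.2 hx
    have hy : ‖x‖⁻¹ • x ∈ Metric.sphere (0 : ℝ × ℝ) 1 := by
      simp [norm_smul, abs_of_pos (inv_pos.2 hnx), inv_mul_cancel₀ (ne_of_gt hnx)]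
    have := hmin _ hy
    have hxx : x = ‖x‖ • (‖x‖⁻¹ • x) := by
      rw [smul_smul, mul_inv_cancel₀ (ne_of_gt hnx), one_smul]
    calc N x₀ * ‖x‖ ≤ N (‖x‖⁻¹ • x) * ‖x‖ := by nlinarith
      _ = N (‖x‖ • (‖x‖⁻¹ • x)) := by
          rw [hN.2.1 ‖x‖ (‖x‖⁻¹ • x), abs_of_pos hnx]; ring
      _ = N x := by rw [← hxx]

lemma sphere_isCompact (hN : IsNorm N) : IsCompact {x : ℝ × ℝ | N x = 1} := by
  obtain ⟨m, hm0, hm⟩ := hN.lower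
  have hclosed : IsClosed {x : ℝ × ℝ | N x = 1} :=
    isClosed_eq hN.continuous continuous_const
  refine (isCompact_closedBall (0 : ℝ × ℝ) m⁻¹).of_isClosed_subset hclosed ?_
  intro x hx
  rw [Metric.mem_closedBall, dist_zero_right]
  have := hm x
  rw [mem_setOf_eq] at hx
  rw [hx] at this
  rw [inv_eq_one_div, le_div_iff₀ hm0]
  linarith
end Topo
section Par
variable {N : ℝ × ℝ → ℝ} {ρ : ℝ}

noncomputable def par (N : ℝ × ℝ → ℝ) (θ : ℝ) : ℝ × ℝ :=
  (N (Real.cos θ, Real.sin θ))⁻¹ • (Real.cos θ, Real.sin θ)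

lemma trig_ne_zero (θ : ℝ) : ((Real.cos θ, Real.sin θ) : ℝ × ℝ) ≠ 0 := by
  intro h
  rw [Prod.ext_iff] at h
  have := Real.sin_sq_add_cos_sq θ
  simp only [Prod.fst_zero, Prod.snd_zero] at h
  rw [h.1, h.2] at this
  norm_num at this

lemma par_norm (hN : IsNorm N) (θ : ℝ) : N (par N θ) = 1 := by
  have hpos : 0 < N (Real.cos θ, Real.sin θ) := hN.pos (trig_ne_zero θ)
  rw [par, hN.2.1, abs_of_pos (inv_pos.2 hpos), inv_mul_cancel₀ (ne_of_gt hpos)]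

lemma par_continuous (hN : IsNorm N) : Continuous (par N) := by
  have h1 : Continuous fun θ : ℝ => ((Real.cos θ, Real.sin θ) : ℝ × ℝ) := by continuity
  exact ((hN.continuous.comp h1).inv₀
    (fun θ => ne_of_gt (hN.pos (trig_ne_zero θ)))).smul h1

lemma par_neg (hN : IsNorm N) (θ : ℝ) : par N (θ - π) = - par N θ := by
  have h : ((Real.cos (θ - π), Real.sin (θ - π)) : ℝ × ℝ) = -(Real.cos θ, Real.sin θ) := by
    rw [Real.cos_sub_pi, Real.sin_sub_pi]
    rfl
  rw [par, par, h, hN.neg, smul_neg]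

lemma par_wedge (hN : IsNorm N) (θ₁ θ₂ : ℝ) :
    wedge (par N θ₁) (par N θ₂) =
      (N (Real.cos θ₁, Real.sin θ₁))⁻¹ * (N (Real.cos θ₂, Real.sin θ₂))⁻¹
        * Real.sin (θ₂ - θ₁) := by
  rw [par, par, wedge_smul_left, wedge_smul_right, Real.sin_sub]
  unfold wedge
  simp only
  ring

lemma par_surj (hN : IsNorm N) {w : ℝ × ℝ} (hw : N w = 1) : ∃ θ : ℝ, par N θ = w := by
  have hw0 : w ≠ 0 := by
    intro h; rw [h, hN.zero] at hw; norm_num at hw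
  set z : ℂ := ⟨w.1, w.2⟩ with hz
  have hz0 : z ≠ 0 := by
    intro h
    apply hw0
    have h1 : z.re = 0 := by rw [h]; rfl
    have h2 : z.im = 0 := by rw [h]; rfl
    exact Prod.ext h1 h2
  have habs : 0 < ‖z‖ := by
    exact norm_pos_iff.2 hz0
  refine ⟨Complex.arg z, ?_⟩
  have hcos : Real.cos (Complex.arg z) = w.1 / ‖z‖ := Complex.cos_arg hz0
  have hsin : Real.sin (Complex.arg z) = w.2 / ‖z‖ := Complex.sin_arg z
  have hpt : ((Real.cos (Complex.arg z), Real.sin (Complex.arg z)) : ℝ × ℝ)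
      = (‖z‖)⁻¹ • w := by
    rw [hcos, hsin]
    refine Prod.ext ?_ ?_ <;> simp [div_eq_inv_mul, mul_comm]
  have hNpt : N ((Real.cos (Complex.arg z), Real.sin (Complex.arg z)) : ℝ × ℝ)
      = (‖z‖)⁻¹ := by
    rw [hpt, hN.2.1, abs_of_pos (inv_pos.2 habs), hw, mul_one]
  rw [par, hNpt, hpt, inv_inv, smul_smul, mul_inv_cancel₀ (ne_of_gt habs), one_smul]

/-- Every point of `S` has a predecessor: a chord ending at `w` supporting `ρS`. -/
lemma exists_pred (hN : IsNorm N) (hρ0 : 0 < ρ) (hρ1 : ρ < 1) {w : ℝ × ℝ}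
    (hw : N w = 1) : ∃ u : ℝ × ℝ, N u = 1 ∧ 0 < wedge u w ∧ segInf N u w = ρ := by
  obtain ⟨θ₀, hθ₀⟩ := par_surj hN hw
  have hgcont : Continuous fun x : ℝ × ℝ => segInf N x w := by
    apply hN.continuous_of
    intro x y
    have := segInf_abs_sub hN x w y w
    rw [sub_self, hN.zero] at this
    linarith [this]
  have hfcont : Continuous fun θ : ℝ => segInf N (par N θ) w :=
    hgcont.comp (par_continuous hN)
  have hf1 : segInf N (par N θ₀) w = 1 := by
    rw [hθ₀, segInf_self hN, hw]
  have hf0 : segInf N (par N (θ₀ - π)) w = 0 := by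
    rw [par_neg hN, hθ₀]
    have := segInf_neg_self hN (-w)
    rw [neg_neg] at this
    exact this
  have hsub : Icc (segInf N (par N (θ₀ - π)) w) (segInf N (par N θ₀) w)
      ⊆ (fun θ : ℝ => segInf N (par N θ) w) '' Icc (θ₀ - π) θ₀ :=
    intermediate_value_Icc (a := θ₀ - π) (b := θ₀)
      (f := fun θ : ℝ => segInf N (par N θ) w) (by linarith [Real.pi_pos])
      hfcont.continuousOn
  have hρmem : ρ ∈ Icc (segInf N (par N (θ₀ - π)) w) (segInf N (par N θ₀) w) := by
    rw [hf0, hf1]; exact ⟨le_of_lt hρ0, le_of_lt hρ1⟩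
  obtain ⟨θ, hθmem, hθρ'⟩ := hsub hρmem
  have hθρ : segInf N (par N θ) w = ρ := hθρ'
  have hne1 : θ ≠ θ₀ - π := by
    intro h; rw [h] at hθρ; rw [hf0] at hθρ; linarith
  have hne2 : θ ≠ θ₀ := by
    intro h; rw [h] at hθρ; rw [hf1] at hθρ; linarith
  have hθlt : θ₀ - θ ∈ Ioo 0 π := by
    rcases hθmem with ⟨h1, h2⟩
    constructor
    · rcases lt_or_eq_of_le h2 with h | h
      · linarith
      · exact absurd h hne2
    · rcases lt_or_eq_of_le h1 with h | h
      · linarith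
      · exact absurd h.symm hne1
  refine ⟨par N θ, par_norm hN θ, ?_, hθρ⟩
  rw [← hθ₀, par_wedge hN]
  have hsin : 0 < Real.sin (θ₀ - θ) := Real.sin_pos_of_pos_of_lt_pi hθlt.1 hθlt.2
  have p1 : 0 < N (Real.cos θ, Real.sin θ) := hN.pos (trig_ne_zero θ)
  have p2 : 0 < N (Real.cos θ₀, Real.sin θ₀) := hN.pos (trig_ne_zero θ₀)
  positivity

end Par

open Filter Topology

/-- Under (P-ρS), the map `u ↦ u*` (where `u*` is the unique point of `S`
with `u ≺ u*` such that `[u,u*]` supports `ρS`) is a homeomorphism of `S` onto `S`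
preserving the cyclic order: `u ≺ v` implies `u* ≺ v*`. -/
theorem stmt_8 (N : ℝ × ℝ → ℝ) (hN : IsNorm N) (ρ : ℝ) (hρ0 : 0 < ρ) (hρ1 : ρ < 1)
    (hP : PropP N ρ) (star : ℝ × ℝ → ℝ × ℝ)
    (hstar : ∀ u : ℝ × ℝ, N u = 1 →
      (N (star u) = 1 ∧ 0 < wedge u (star u) ∧ segInf N u (star u) = ρ) ∧
      ∀ w : ℝ × ℝ, N w = 1 → 0 < wedge u w → segInf N u w = ρ → w = star u) :
    (∃ h : {x : ℝ × ℝ // N x = 1} ≃ₜ {x : ℝ × ℝ // N x = 1},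
        ∀ x : {x : ℝ × ℝ // N x = 1}, (h x : ℝ × ℝ) = star x) ∧
    ∀ u v : ℝ × ℝ, N u = 1 → N v = 1 → 0 < wedge u v → 0 < wedge (star u) (star v) := by
  have hstar1 : ∀ u : ℝ × ℝ, N u = 1 → N (star u) = 1 := fun u hu => (hstar u hu).1.1
  have horder : ∀ u v : ℝ × ℝ, N u = 1 → N v = 1 → 0 < wedge u v →
      0 < wedge (star u) (star v) := by
    intro u v hu hv huv
    obtain ⟨⟨hw1, huw1, h1⟩, -⟩ := hstar u hu
    obtain ⟨⟨hw2, hvw2, h2⟩, -⟩ := hstar v hv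
    exact order_pres hN hρ0 hρ1 hP hu hv hw1 hw2 h1 h2 huw1 hvw2 huv
  refine ⟨?_, horder⟩
  have hstar_neg : ∀ u : ℝ × ℝ, N u = 1 → star (-u) = - star u := by
    intro u hu
    have hnu : N (-u) = 1 := by rw [hN.neg]; exact hu
    obtain ⟨⟨h1, h2, h3⟩, -⟩ := hstar u hu
    exact ((hstar (-u) hnu).2 (-(star u)) (by rw [hN.neg]; exact h1)
      (by rw [wedge_neg_left, wedge_neg_right, neg_neg]; exact h2)
      (by rw [segInf_neg hN]; exact h3)).symm
  have hinj : ∀ u v : ℝ × ℝ, N u = 1 → N v = 1 → star u = star v → u = v := by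
    intro u v hu hv heq
    rcases lt_trichotomy (wedge u v) 0 with h | h | h
    · exfalso
      have h' : 0 < wedge v u := by rw [wedge_swap] at h; linarith
      have := horder v u hv hu h'
      rw [heq, wedge_self] at this; linarith
    · rcases wedge_eq_zero_unit hN hu hv h with h' | h'
      · exact h'.symm
      · exfalso
        rw [h', hstar_neg u hu] at heq
        have h0 : star u = 0 := by
          have e1 := congrArg Prod.fst heq
          have e2 := congrArg Prod.snd heq
          simp only [Prod.fst_neg, Prod.snd_neg] at e1 e2
          refine Prod.ext ?_ ?_ <;> simp only [Prod.fst_zero, Prod.snd_zero] <;> linarith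
        have := hstar1 u hu
        rw [h0, hN.zero] at this
        norm_num at this
    · exfalso
      have := horder u v hu hv h
      rw [heq, wedge_self] at this; linarith
  have hsurj : ∀ w : ℝ × ℝ, N w = 1 → ∃ u, N u = 1 ∧ star u = w := by
    intro w hw
    obtain ⟨u, hu, huw, hseg⟩ := exists_pred hN hρ0 hρ1 hw
    exact ⟨u, hu, ((hstar u hu).2 w hw huw hseg).symm⟩
  haveI hcs : CompactSpace {x : ℝ × ℝ // N x = 1} :=
    isCompact_iff_compactSpace.mp (sphere_isCompact hN)
  let Φ : {x : ℝ × ℝ // N x = 1} → {x : ℝ × ℝ // N x = 1} :=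
    fun x => ⟨star x.1, hstar1 x.1 x.2⟩
  have hΦcont : Continuous Φ := by
    rw [continuous_iff_seqContinuous]
    intro xs x hxs
    have hxs' : Tendsto (fun n => ((xs n : ℝ × ℝ))) atTop (𝓝 (x : ℝ × ℝ)) :=
      (continuous_subtype_val.tendsto x).comp hxs
    rw [tendsto_subtype_rng]
    show Tendsto (fun n => star (xs n).1) atTop (𝓝 (star x.1))
    apply Filter.tendsto_of_subseq_tendsto
    intro ns hns
    obtain ⟨y, hyS, ms, hms, hlim⟩ :=
      (sphere_isCompact hN).tendsto_subseq (x := fun n => star ((xs (ns n)).1))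
        (fun n => hstar1 _ (xs (ns n)).2)
    have hyN : N y = 1 := hyS
    have hxx : Tendsto (fun n => ((xs (ns (ms n))).1)) atTop (𝓝 (x : ℝ × ℝ)) :=
      hxs'.comp (hns.comp hms.tendsto_atTop)
    have hww : Tendsto (fun n => star ((xs (ns (ms n))).1)) atTop (𝓝 y) := hlim
    have hb1 : Tendsto (fun n => N ((xs (ns (ms n))).1 - (x : ℝ × ℝ))) atTop (𝓝 0) := by
      have hsub : Tendsto (fun n => (xs (ns (ms n))).1 - (x : ℝ × ℝ)) atTop (𝓝 0) := by
        simpa using hxx.sub (tendsto_const_nhds (x := (x : ℝ × ℝ)))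
      have := (hN.continuous.tendsto 0).comp hsub
      rwa [hN.zero] at this
    have hb2 : Tendsto (fun n => N (star ((xs (ns (ms n))).1) - y)) atTop (𝓝 0) := by
      have hsub : Tendsto (fun n => star ((xs (ns (ms n))).1) - y) atTop (𝓝 0) := by
        simpa using hww.sub (tendsto_const_nhds (x := y))
      have := (hN.continuous.tendsto 0).comp hsub
      rwa [hN.zero] at this
    have hseg_lim : Tendsto
        (fun n => segInf N ((xs (ns (ms n))).1) (star ((xs (ns (ms n))).1)))
        atTop (𝓝 (segInf N (x : ℝ × ℝ) y)) := by
      rw [tendsto_iff_dist_tendsto_zero]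
      refine squeeze_zero (fun n => dist_nonneg) (fun n => ?_) (by simpa using hb1.add hb2)
      rw [Real.dist_eq]
      exact segInf_abs_sub hN _ _ _ _
    have hseg_const : segInf N (x : ℝ × ℝ) y = ρ := by
      have hconst : (fun n => segInf N ((xs (ns (ms n))).1) (star ((xs (ns (ms n))).1)))
          = fun _ => ρ := funext fun n => ((hstar _ (xs (ns (ms n))).2).1).2.2
      rw [hconst] at hseg_lim
      exact tendsto_nhds_unique hseg_lim tendsto_const_nhds
    have hwedge_lim : Tendsto
        (fun n => wedge ((xs (ns (ms n))).1) (star ((xs (ns (ms n))).1)))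
        atTop (𝓝 (wedge (x : ℝ × ℝ) y)) := by
      unfold wedge
      exact ((((continuous_fst.tendsto _).comp hxx).mul
          ((continuous_snd.tendsto _).comp hww)).sub
        (((continuous_snd.tendsto _).comp hxx).mul
          ((continuous_fst.tendsto _).comp hww)))
    have hwedge_nonneg : 0 ≤ wedge (x : ℝ × ℝ) y :=
      ge_of_tendsto hwedge_lim
        (Filter.Eventually.of_forall fun n => le_of_lt ((hstar _ (xs (ns (ms n))).2).1).2.1)
    have hy_eq : y = star (x : ℝ × ℝ) := by
      rcases lt_or_eq_of_le hwedge_nonneg with hpos | hzero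
      · exact (hstar (x : ℝ × ℝ) x.2).2 y hyN hpos hseg_const
      · exfalso
        rcases wedge_eq_zero_unit hN x.2 hyN hzero.symm with h' | h'
        · rw [h', segInf_self hN, x.2] at hseg_const; linarith
        · rw [h', segInf_neg_self hN] at hseg_const; linarith
    exact ⟨ms, hy_eq ▸ hlim⟩
  let e : {x : ℝ × ℝ // N x = 1} ≃ {x : ℝ × ℝ // N x = 1} :=
    Equiv.ofBijective Φ
      ⟨fun a b hab => Subtype.ext (hinj a.1 b.1 a.2 b.2 (congrArg Subtype.val hab)),
       fun w => by
        obtain ⟨u, hu, hsu⟩ := hsurj w.1 w.2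
        exact ⟨⟨u, hu⟩, Subtype.ext hsu⟩⟩
  have he : Continuous e := hΦcont
  exact ⟨Continuous.homeoOfEquivCompactToT2 (f := e) he, fun x => rfl⟩
end

section
/- Let X be a two-dimensional real normed space with unit sphere S, 0 < ρ < 1, and u ∈ S such that the ρ-polygon P_u is finite with an odd number n of vertices (u_{n+1} = u₁ with n minimal, n odd). Then P_u and P_{−u} = −P_u are disjoint: no vertex of P_u equals the negative of a vertex of P_u. -/
open Real Set

/-- If the ρ-polygon `P_u` is finite with an odd number `n` of vertices
(`n` the minimal period of `u` under the successor map), then `P_u ∩ (−P_u) = ∅`: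
no vertex of `P_u` is the negative of a vertex of `P_u`. -/
theorem stmt_11 (N : ℝ × ℝ → ℝ) (hN : IsNorm N) (ρ : ℝ) (hρ0 : 0 < ρ) (hρ1 : ρ < 1)
    (star : ℝ × ℝ → ℝ × ℝ)
    (hstar : ∀ u : ℝ × ℝ, N u = 1 →
      (N (star u) = 1 ∧ 0 < wedge u (star u) ∧ segInf N u (star u) = ρ) ∧
      ∀ w : ℝ × ℝ, N w = 1 → 0 < wedge u w → segInf N u w = ρ → w = star u)
    (u : ℝ × ℝ) (hu : N u = 1) (n : ℕ) (hn : 0 < n) (hodd : Odd n)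
    (hper : star^[n] u = u) (hmin : ∀ m : ℕ, 0 < m → m < n → star^[m] u ≠ u) :
    ∀ i j : ℕ, star^[i] u ≠ -(star^[j] u) := by
  obtain ⟨hN0, hNsmul, hNadd⟩ := hN
  have hNneg : ∀ x : ℝ × ℝ, N (-x) = N x := by
    intro x
    have := hNsmul (-1) x
    simpa using this
  have hsnorm : ∀ x, N x = 1 → N (star x) = 1 := fun x hx => ((hstar x hx).1).1
  have hiter : ∀ (k : ℕ) (x : ℝ × ℝ), N x = 1 → N (star^[k] x) = 1 := by
    intro k
    induction k with
    | zero => intro x hx; simpa using hx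
    | succ k ih =>
      intro x hx
      rw [Function.iterate_succ_apply]
      exact ih _ (hsnorm x hx)
  have hsegneg : ∀ a b : ℝ × ℝ, segInf N (-a) (-b) = segInf N a b := by
    intro a b
    unfold segInf
    congr 1
    apply Set.image_congr
    intro t _
    have h : (1 - t) • (-a) + t • (-b) = -((1 - t) • a + t • b) := by module
    rw [h, hNneg]
  have hstarneg : ∀ x, N x = 1 → star (-x) = -(star x) := by
    intro x hx
    have hx' : N (-x) = 1 := by rw [hNneg]; exact hx
    have h1 : N (-(star x)) = 1 := by rw [hNneg]; exact hsnorm x hx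
    have hw : 0 < wedge (-x) (-(star x)) := by
      have hw0 := ((hstar x hx).1).2.1
      unfold wedge at hw0 ⊢
      simp only [Prod.fst_neg, Prod.snd_neg]
      nlinarith [hw0]
    have hseg : segInf N (-x) (-(star x)) = ρ := by
      rw [hsegneg]; exact ((hstar x hx).1).2.2
    exact ((hstar (-x) hx').2 _ h1 hw hseg).symm
  have hiterneg : ∀ (k : ℕ) (x : ℝ × ℝ), N x = 1 → star^[k] (-x) = -(star^[k] x) := by
    intro k
    induction k with
    | zero => intro x _; simp
    | succ k ih =>
      intro x hx
      rw [Function.iterate_succ_apply, Function.iterate_succ_apply, hstarneg x hx]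
      exact ih _ (hsnorm x hx)
  have hmul : ∀ q : ℕ, star^[n * q] u = u := by
    intro q
    induction q with
    | zero => simp
    | succ q ih =>
      rw [Nat.mul_succ, Function.iterate_add_apply, hper, ih]
  have hmod : ∀ i : ℕ, star^[i] u = star^[i % n] u := by
    intro i
    conv_lhs => rw [← Nat.mod_add_div i n]
    rw [Function.iterate_add_apply, hmul]
  have hdvd : ∀ m : ℕ, star^[m] u = u → n ∣ m := by
    intro m hm
    have hr : star^[m % n] u = u := by rw [← hmod]; exact hm
    by_contra h
    have hrpos : 0 < m % n := Nat.pos_of_ne_zero (fun h0 => h (Nat.dvd_of_mod_eq_zero h0))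
    exact hmin _ hrpos (Nat.mod_lt _ hn) hr
  intro i j hij
  set m : ℕ := j * (n - 1) with hm
  have hmj : m + j = n * j := by
    have h1 : 1 ≤ n := hn
    calc m + j = j * (n - 1) + j := rfl
      _ = j * (n - 1 + 1) := by ring
      _ = j * n := by rw [Nat.sub_add_cancel h1]
      _ = n * j := Nat.mul_comm j n
  set c : ℕ := m + i with hc
  have hcu : star^[c] u = -u := by
    have h1 : star^[c] u = star^[m] (star^[i] u) := by
      rw [hc, Function.iterate_add_apply]
    rw [h1, hij, hiterneg m _ (hiter j u hu), ← Function.iterate_add_apply, hmj, hmul]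
  have h2c : star^[2 * c] u = u := by
    have : star^[2 * c] u = star^[c] (star^[c] u) := by
      rw [two_mul, Function.iterate_add_apply]
    rw [this, hcu, hiterneg c u hu, hcu, neg_neg]
  have hndvd2c : n ∣ 2 * c := hdvd _ h2c
  have hnd : ¬ 2 ∣ n := by
    rcases hodd with ⟨k, hk⟩
    omega
  have hcop : Nat.Coprime n 2 :=
    Nat.coprime_comm.mp ((Nat.prime_two.coprime_iff_not_dvd).mpr hnd)
  have hndvdc : n ∣ c := (Nat.Coprime.dvd_of_dvd_mul_left hcop hndvd2c)
  obtain ⟨q, hq⟩ := hndvdc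
  have hcu' : star^[c] u = u := by rw [hq]; exact hmul q
  have huz : u = 0 := by
    have h : u = -u := hcu'.symm.trans hcu
    have h2 : (2 : ℝ) • u = 0 := by
      rw [two_smul]
      nth_rewrite 2 [h]
      simp
    rcases smul_eq_zero.mp h2 with h' | h'
    · norm_num at h'
    · exact h'
  rw [huz] at hu
  have : N 0 = 0 := (hN0 0).mpr rfl
  rw [this] at hu
  norm_num at hu
end

section
/- Let X be a two-dimensional real normed space satisfying property (P-ρS) for some 0 < ρ < 1, with natural parametrization s of S and s⊥ as above. Then for any 0 ≤ α < β ≤ 2π, ∫_α^β s(θ) ∧ ds⊥(θ) = s(β) ∧ s⊥(β) − s(α) ∧ s⊥(α). -/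
open Real Set

/-- `HasRSIntegral F G a b I` says the Riemann–Stieltjes integral
`∫_a^b F(θ) ∧ dG(θ)` exists and equals `I`: Riemann–Stieltjes sums over tagged
partitions of `[a,b]` with small mesh are close to `I`. -/
def HasRSIntegral (F G : ℝ → ℝ × ℝ) (a b I : ℝ) : Prop :=
  ∀ ε > (0:ℝ), ∃ δ > (0:ℝ), ∀ (n : ℕ) (t τ : ℕ → ℝ), 0 < n →
    t 0 = a → t n = b →
    (∀ i < n, t i ≤ τ i ∧ τ i ≤ t (i + 1) ∧ t i ≤ t (i + 1) ∧ t (i + 1) - t i < δ) →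
    |(∑ i ∈ Finset.range n, wedge (F (τ i)) (G (t (i + 1)) - G (t i))) - I| < ε

lemma abs_wedge_le (x y : ℝ × ℝ) : |wedge x y| ≤ 2 * ‖x‖ * ‖y‖ := by
  have h1 : |x.1| ≤ ‖x‖ := by simpa [Real.norm_eq_abs] using norm_fst_le x
  have h2 : |x.2| ≤ ‖x‖ := by simpa [Real.norm_eq_abs] using norm_snd_le x
  have h3 : |y.1| ≤ ‖y‖ := by simpa [Real.norm_eq_abs] using norm_fst_le y
  have h4 : |y.2| ≤ ‖y‖ := by simpa [Real.norm_eq_abs] using norm_snd_le y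
  have e1 : x.1 * y.2 ≤ ‖x‖ * ‖y‖ := le_trans (le_abs_self _)
    (by rw [abs_mul]; exact mul_le_mul h1 h4 (abs_nonneg _) (norm_nonneg _))
  have e2 : -(‖x‖ * ‖y‖) ≤ x.1 * y.2 := by
    have := neg_abs_le (x.1 * y.2)
    have h5 : |x.1 * y.2| ≤ ‖x‖ * ‖y‖ := by
      rw [abs_mul]; exact mul_le_mul h1 h4 (abs_nonneg _) (norm_nonneg _)
    linarith
  have e3 : x.2 * y.1 ≤ ‖x‖ * ‖y‖ := le_trans (le_abs_self _)
    (by rw [abs_mul]; exact mul_le_mul h2 h3 (abs_nonneg _) (norm_nonneg _))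
  have e4 : -(‖x‖ * ‖y‖) ≤ x.2 * y.1 := by
    have := neg_abs_le (x.2 * y.1)
    have h5 : |x.2 * y.1| ≤ ‖x‖ * ‖y‖ := by
      rw [abs_mul]; exact mul_le_mul h2 h3 (abs_nonneg _) (norm_nonneg _)
    linarith
  rw [abs_le]
  constructor <;> simp only [wedge] <;> linarith

lemma trig_contra {th th' Aa A' a a' : ℝ} (h1 : th < th') (h2 : th' - th < π)
    (h4 : Aa < th + π) (h5 : th' < A')
    (h7 : A' < Aa) (ha : 0 < a) (ha' : 0 < a')
    (hi : a' * Real.sin (Aa - th') ≤ a * Real.sin (Aa - th))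
    (hii : a * Real.sin (A' - th) ≤ a' * Real.sin (A' - th')) : False := by
  have s1 : 0 < Real.sin (Aa - th') := Real.sin_pos_of_pos_of_lt_pi (by linarith) (by linarith)
  have s2 : 0 < Real.sin (A' - th) := Real.sin_pos_of_pos_of_lt_pi (by linarith) (by linarith)
  have s3 : 0 < Real.sin (Aa - th) := Real.sin_pos_of_pos_of_lt_pi (by linarith) (by linarith)
  have s5 : 0 < Real.sin (Aa - A') := Real.sin_pos_of_pos_of_lt_pi (by linarith) (by linarith)
  have s6 : 0 < Real.sin (th' - th) := Real.sin_pos_of_pos_of_lt_pi (by linarith) (by linarith)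
  have key : Real.sin (Aa - th') * Real.sin (A' - th) - Real.sin (Aa - th) * Real.sin (A' - th') =
      Real.sin (Aa - A') * Real.sin (th' - th) := by
    simp only [Real.sin_sub, Real.cos_sub]
    ring
  have hm : (a' * Real.sin (Aa - th')) * (a * Real.sin (A' - th)) ≤
      (a * Real.sin (Aa - th)) * (a' * Real.sin (A' - th')) :=
    mul_le_mul hi hii (mul_nonneg (le_of_lt ha) (le_of_lt s2)) (mul_nonneg (le_of_lt ha) (le_of_lt s3))
  have e1 : (a' * Real.sin (Aa - th')) * (a * Real.sin (A' - th)) =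
      (a * a') * (Real.sin (Aa - th') * Real.sin (A' - th)) := by ring
  have e2 : (a * Real.sin (Aa - th)) * (a' * Real.sin (A' - th')) =
      (a * a') * (Real.sin (Aa - th) * Real.sin (A' - th')) := by ring
  rw [e1, e2] at hm
  have := le_of_mul_le_mul_left hm (mul_pos ha ha')
  nlinarith [mul_pos s5 s6]

lemma polar_aux {P : ℝ × ℝ} {θ : ℝ} (h : 0 < Real.cos θ * P.2 - Real.sin θ * P.1) :
    0 < Real.arccos ((Real.cos θ * P.1 + Real.sin θ * P.2) /
        Real.sqrt ((Real.cos θ * P.1 + Real.sin θ * P.2) ^ 2 +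
          (Real.cos θ * P.2 - Real.sin θ * P.1) ^ 2)) ∧
    Real.arccos ((Real.cos θ * P.1 + Real.sin θ * P.2) /
        Real.sqrt ((Real.cos θ * P.1 + Real.sin θ * P.2) ^ 2 +
          (Real.cos θ * P.2 - Real.sin θ * P.1) ^ 2)) < π ∧
    P = Real.sqrt ((Real.cos θ * P.1 + Real.sin θ * P.2) ^ 2 +
          (Real.cos θ * P.2 - Real.sin θ * P.1) ^ 2) •
        ((Real.cos (θ + Real.arccos ((Real.cos θ * P.1 + Real.sin θ * P.2) /
            Real.sqrt ((Real.cos θ * P.1 + Real.sin θ * P.2) ^ 2 +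
              (Real.cos θ * P.2 - Real.sin θ * P.1) ^ 2))),
          Real.sin (θ + Real.arccos ((Real.cos θ * P.1 + Real.sin θ * P.2) /
            Real.sqrt ((Real.cos θ * P.1 + Real.sin θ * P.2) ^ 2 +
              (Real.cos θ * P.2 - Real.sin θ * P.1) ^ 2)))) : ℝ × ℝ) := by
  set c1 := Real.cos θ * P.1 + Real.sin θ * P.2 with hc1
  set c2 := Real.cos θ * P.2 - Real.sin θ * P.1 with hc2
  set r := Real.sqrt (c1 ^ 2 + c2 ^ 2) with hr
  have hsum : 0 < c1 ^ 2 + c2 ^ 2 := by nlinarith [sq_nonneg c1]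
  have hrpos : 0 < r := Real.sqrt_pos.mpr hsum
  have hr2 : r ^ 2 = c1 ^ 2 + c2 ^ 2 := Real.sq_sqrt (le_of_lt hsum)
  have habs : |c1| < r := by
    rw [hr, ← Real.sqrt_sq_eq_abs]
    exact Real.sqrt_lt_sqrt (sq_nonneg c1) (by nlinarith)
  have habs' := abs_lt.mp habs
  have hd1 : -1 < c1 / r := by rw [lt_div_iff₀ hrpos]; nlinarith
  have hd2 : c1 / r < 1 := by rw [div_lt_one hrpos]; nlinarith
  have hcos : Real.cos (Real.arccos (c1 / r)) = c1 / r := Real.cos_arccos (le_of_lt hd1) (le_of_lt hd2)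
  have hsin : Real.sin (Real.arccos (c1 / r)) = c2 / r := by
    rw [Real.sin_arccos]
    have h1 : 1 - (c1 / r) ^ 2 = (c2 / r) ^ 2 := by
      field_simp
      nlinarith
    rw [h1, Real.sqrt_sq (by positivity)]
  refine ⟨Real.arccos_pos.mpr hd2, ?_, ?_⟩
  · rcases lt_or_eq_of_le (Real.arccos_le_pi (c1 / r)) with hh | hh
    · exact hh
    · exfalso
      have := Real.arccos_eq_pi.mp hh
      linarith
  · have pyth := Real.sin_sq_add_cos_sq θ
    apply Prod.ext
    · simp only [Prod.smul_fst, smul_eq_mul, Real.cos_add, hcos, hsin]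
      field_simp
      rw [hc1, hc2]
      linear_combination (-P.1) * pyth
    · simp only [Prod.smul_snd, smul_eq_mul, Real.sin_add, hcos, hsin]
      field_simp
      rw [hc1, hc2]
      linear_combination (-P.2) * pyth

lemma half_le_norm_circ (φ : ℝ) : (1:ℝ) / 2 ≤ ‖((Real.cos φ, Real.sin φ) : ℝ × ℝ)‖ := by
  rw [Prod.norm_def, Real.norm_eq_abs, Real.norm_eq_abs]
  by_contra hcon
  push_neg at hcon
  obtain ⟨hh1, hh2⟩ := max_lt_iff.mp hcon
  have e1 : |Real.cos φ| * |Real.cos φ| < (1/2) * (1/2) :=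
    mul_lt_mul'' hh1 hh1 (abs_nonneg _) (abs_nonneg _)
  have e2 : |Real.sin φ| * |Real.sin φ| < (1/2) * (1/2) :=
    mul_lt_mul'' hh2 hh2 (abs_nonneg _) (abs_nonneg _)
  rw [abs_mul_abs_self] at e1 e2
  nlinarith [Real.sin_sq_add_cos_sq φ]

lemma circ_lip (x y : ℝ) :
    ‖((Real.cos x, Real.sin x) : ℝ × ℝ) - (Real.cos y, Real.sin y)‖ ≤ |x - y| := by
  have hsin : |Real.sin x - Real.sin y| ≤ |x - y| := by
    rw [Real.sin_sub_sin, abs_mul, abs_mul]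
    have h1 : |Real.sin ((x - y) / 2)| ≤ |(x - y) / 2| := Real.abs_sin_le_abs
    have h2 : |Real.cos ((x + y) / 2)| ≤ 1 := Real.abs_cos_le_one _
    have h3 : |(x - y) / 2| = |x - y| / 2 := by rw [abs_div]; simp
    have h4 : |(2:ℝ)| = 2 := by norm_num
    rw [h4]
    nlinarith [abs_nonneg (Real.sin ((x - y) / 2)), abs_nonneg (x - y)]
  have hcos : |Real.cos x - Real.cos y| ≤ |x - y| := by
    rw [Real.cos_sub_cos, abs_mul, abs_mul]
    have h1 : |Real.sin ((x - y) / 2)| ≤ |(x - y) / 2| := Real.abs_sin_le_abs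
    have h2 : |Real.sin ((x + y) / 2)| ≤ 1 := Real.abs_sin_le_one _
    have h3 : |(x - y) / 2| = |x - y| / 2 := by rw [abs_div]; simp
    have h4 : |(-2:ℝ)| = 2 := by norm_num
    rw [h4]
    nlinarith [abs_nonneg (Real.sin ((x - y) / 2)), abs_nonneg (x - y),
      abs_nonneg (Real.sin ((x + y) / 2))]
  rw [Prod.norm_def]
  apply max_le
  · simpa [Real.norm_eq_abs] using hcos
  · simpa [Real.norm_eq_abs] using hsin

lemma circ_norm_le_one (φ : ℝ) : ‖((Real.cos φ, Real.sin φ) : ℝ × ℝ)‖ ≤ 1 := by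
  rw [Prod.norm_def, Real.norm_eq_abs, Real.norm_eq_abs]
  exact max_le (Real.abs_cos_le_one φ) (Real.abs_sin_le_one φ)

set_option maxHeartbeats 1600000 in
theorem stmt_14 (N : ℝ × ℝ → ℝ) (hN : IsNorm N) (ρ : ℝ) (hρ0 : 0 < ρ) (hρ1 : ρ < 1)
    (hP : PropP N ρ) (s sperp : ℝ → ℝ × ℝ)
    (hs : ∀ θ : ℝ, s θ = (N (Real.cos θ, Real.sin θ))⁻¹ • ((Real.cos θ, Real.sin θ) : ℝ × ℝ))
    (hperp : ∀ θ ∈ Icc (0:ℝ) (2 * π), N (sperp θ) = 1 ∧ 0 < wedge (s θ) (sperp θ) ∧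
      ∀ l : ℝ, N (s θ) ≤ N (s θ + l • sperp θ))
    (α β : ℝ) (hα : 0 ≤ α) (hαβ : α < β) (hβ : β ≤ 2 * π) :
    HasRSIntegral s sperp α β (wedge (s β) (sperp β) - wedge (s α) (sperp α)) := by
  obtain ⟨hN0, hNhom, hNadd⟩ := hN
  have hNzero : N 0 = 0 := (hN0 0).mpr rfl
  have hNneg : ∀ x : ℝ × ℝ, N (-x) = N x := by
    intro x
    have h : (-x : ℝ × ℝ) = (-1 : ℝ) • x := by ext <;> simp
    rw [h, hNhom]; simp
  have hNnonneg : ∀ x : ℝ × ℝ, 0 ≤ N x := by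
    intro x
    have h := hNadd x (-x)
    rw [hNneg] at h
    have h0 : x + -x = (0 : ℝ × ℝ) := by simp
    rw [h0, hNzero] at h
    linarith
  have hNpos : ∀ x : ℝ × ℝ, x ≠ 0 → 0 < N x := by
    intro x hx
    rcases lt_or_eq_of_le (hNnonneg x) with h | h
    · exact h
    · exact absurd ((hN0 x).mp h.symm) hx
  have hNu : ∀ φ : ℝ, 0 < N (Real.cos φ, Real.sin φ) := by
    intro φ
    apply hNpos
    intro hcon
    have h1 : Real.cos φ = 0 := congrArg Prod.fst hcon
    have h2 : Real.sin φ = 0 := congrArg Prod.snd hcon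
    nlinarith [Real.sin_sq_add_cos_sq φ]
  have hs1 : ∀ φ : ℝ, N (s φ) = 1 := by
    intro φ
    rw [hs φ, hNhom, abs_of_pos (inv_pos.mpr (hNu φ))]
    exact inv_mul_cancel₀ (ne_of_gt (hNu φ))
  -- support inequality
  have hsup : ∀ θ, θ ∈ Icc (0:ℝ) (2 * π) → ∀ x : ℝ × ℝ,
      wedge x (sperp θ) ≤ N x * wedge (s θ) (sperp θ) := by
    intro θ hθ x
    obtain ⟨hP1, hPw, hPs⟩ := hperp θ hθ
    have hwne : wedge (s θ) (sperp θ) ≠ 0 := ne_of_gt hPw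
    set c := wedge x (sperp θ) / wedge (s θ) (sperp θ) with hcdef
    set d := wedge (s θ) x / wedge (s θ) (sperp θ) with hddef
    have hwne' : (s θ).1 * (sperp θ).2 - (s θ).2 * (sperp θ).1 ≠ 0 := by
      simpa [wedge] using hwne
    have hxdec : x = c • (s θ) + d • (sperp θ) := by
      rw [hcdef, hddef]
      apply Prod.ext <;>
        (simp only [wedge, Prod.fst_add, Prod.snd_add, Prod.smul_fst, Prod.smul_snd,
          smul_eq_mul]; field_simp [hwne', show (sperp θ).2 * (s θ).1 - (sperp θ).1 * (s θ).2 ≠ 0 by intro h; apply hwne'; linarith]; ring)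
    have hcw : wedge x (sperp θ) = c * wedge (s θ) (sperp θ) := by
      rw [hcdef]; field_simp
    rcases le_or_gt c 0 with hc | hc
    · rw [hcw]
      nlinarith [hNnonneg x, hPw]
    · have hcd : c * (d / c) = d := by field_simp
      have hx2 : x = c • ((s θ) + (d / c) • sperp θ) := by
        rw [smul_add, smul_smul, hcd]
        exact hxdec
      have hNx : N x = c * N ((s θ) + (d / c) • sperp θ) := by
        rw [hx2, hNhom, abs_of_pos hc]
      have h3 := hPs (d / c)
      rw [hs1 θ] at h3
      have hcN : c ≤ N x := by rw [hNx]; nlinarith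
      rw [hcw]
      nlinarith [hPw]
  -- wedge formula for s
  have hWform : ∀ φ ψ : ℝ, wedge (s φ) (s ψ) =
      (N (Real.cos φ, Real.sin φ))⁻¹ * ((N (Real.cos ψ, Real.sin ψ))⁻¹ * Real.sin (ψ - φ)) := by
    intro φ ψ
    rw [hs φ, hs ψ]
    simp only [wedge, Prod.smul_fst, Prod.smul_snd, smul_eq_mul, Real.sin_sub]
    ring
  -- the angle function
  set A : ℝ → ℝ := fun θ => θ + Real.arccos ((Real.cos θ * (sperp θ).1 + Real.sin θ * (sperp θ).2) /
      Real.sqrt ((Real.cos θ * (sperp θ).1 + Real.sin θ * (sperp θ).2) ^ 2 +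
        (Real.cos θ * (sperp θ).2 - Real.sin θ * (sperp θ).1) ^ 2)) with hAdef
  have hA : ∀ θ, θ ∈ Icc (0:ℝ) (2 * π) → θ < A θ ∧ A θ < θ + π ∧ sperp θ = s (A θ) := by
    intro θ hθ
    obtain ⟨hP1, hPw, _⟩ := hperp θ hθ
    have hc2pos : 0 < Real.cos θ * (sperp θ).2 - Real.sin θ * (sperp θ).1 := by
      have h1 : wedge (s θ) (sperp θ) =
          (N (Real.cos θ, Real.sin θ))⁻¹ * (Real.cos θ * (sperp θ).2 - Real.sin θ * (sperp θ).1) := by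
        rw [hs θ]
        simp only [wedge, Prod.smul_fst, Prod.smul_snd, smul_eq_mul]
        ring
      nlinarith [hPw, inv_pos.mpr (hNu θ), hNu θ]
    obtain ⟨hp1, hp2, hp3⟩ := polar_aux hc2pos
    have hAθ : A θ = θ + Real.arccos ((Real.cos θ * (sperp θ).1 + Real.sin θ * (sperp θ).2) /
        Real.sqrt ((Real.cos θ * (sperp θ).1 + Real.sin θ * (sperp θ).2) ^ 2 +
          (Real.cos θ * (sperp θ).2 - Real.sin θ * (sperp θ).1) ^ 2)) := by
      rw [hAdef]
    refine ⟨by rw [hAθ]; linarith, by rw [hAθ]; linarith, ?_⟩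
    -- sperp θ = s (A θ)
    have hNr : N (sperp θ) = Real.sqrt ((Real.cos θ * (sperp θ).1 + Real.sin θ * (sperp θ).2) ^ 2 +
        (Real.cos θ * (sperp θ).2 - Real.sin θ * (sperp θ).1) ^ 2) *
        N (Real.cos (A θ), Real.sin (A θ)) := by
      nth_rewrite 1 [hp3]
      rw [← hAθ] at hp3 ⊢
      rw [hNhom]
      congr 1
      have hrpos : 0 < Real.sqrt ((Real.cos θ * (sperp θ).1 + Real.sin θ * (sperp θ).2) ^ 2 +
          (Real.cos θ * (sperp θ).2 - Real.sin θ * (sperp θ).1) ^ 2) :=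
        Real.sqrt_pos.mpr (by nlinarith [sq_nonneg (Real.cos θ * (sperp θ).1 + Real.sin θ * (sperp θ).2)])
      exact abs_of_pos hrpos
    rw [hP1] at hNr
    have hrval : Real.sqrt ((Real.cos θ * (sperp θ).1 + Real.sin θ * (sperp θ).2) ^ 2 +
        (Real.cos θ * (sperp θ).2 - Real.sin θ * (sperp θ).1) ^ 2) =
        (N (Real.cos (A θ), Real.sin (A θ)))⁻¹ := by
      have hNA := hNu (A θ)
      rw [inv_eq_one_div, eq_div_iff (ne_of_gt hNA)]
      linarith [hNr]
    rw [hs (A θ), ← hrval]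
    rw [← hAθ] at hp3
    exact hp3
  -- monotonicity of A
  have hmono : ∀ θ θ', θ ∈ Icc (0:ℝ) (2 * π) → θ' ∈ Icc (0:ℝ) (2 * π) → θ ≤ θ' →
      θ' - θ < π → A θ ≤ A θ' := by
    intro θ θ' hθ hθ' hle hltπ
    rcases eq_or_lt_of_le hle with heq | hlt2
    · rw [heq]
    by_contra hcon
    push_neg at hcon
    obtain ⟨hA1, hA2, hA3⟩ := hA θ hθ
    obtain ⟨hB1, hB2, hB3⟩ := hA θ' hθ'
    have hb : 0 < (N (Real.cos (A θ), Real.sin (A θ)))⁻¹ := inv_pos.mpr (hNu (A θ))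
    have hb' : 0 < (N (Real.cos (A θ'), Real.sin (A θ')))⁻¹ := inv_pos.mpr (hNu (A θ'))
    have ha : 0 < (N (Real.cos θ, Real.sin θ))⁻¹ := inv_pos.mpr (hNu θ)
    have ha' : 0 < (N (Real.cos θ', Real.sin θ'))⁻¹ := inv_pos.mpr (hNu θ')
    have hi0 := hsup θ hθ (s θ')
    rw [hs1 θ', one_mul, hA3, hWform θ' (A θ), hWform θ (A θ)] at hi0
    have hii0 := hsup θ' hθ' (s θ)
    rw [hs1 θ, one_mul, hB3, hWform θ (A θ'), hWform θ' (A θ')] at hii0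
    have hi : (N (Real.cos θ', Real.sin θ'))⁻¹ * Real.sin (A θ - θ') ≤
        (N (Real.cos θ, Real.sin θ))⁻¹ * Real.sin (A θ - θ) := by
      have h := hi0
      apply le_of_mul_le_mul_left ?_ hb
      ring_nf
      ring_nf at h
      linarith
    have hii : (N (Real.cos θ, Real.sin θ))⁻¹ * Real.sin (A θ' - θ) ≤
        (N (Real.cos θ', Real.sin θ'))⁻¹ * Real.sin (A θ' - θ') := by
      have h := hii0
      apply le_of_mul_le_mul_left ?_ hb'
      ring_nf
      ring_nf at h
      linarith
    exact trig_contra hlt2 hltπ hA2 hB1 hcon ha ha' hi hii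
  -- norm comparison constants
  have hKub0 : ∀ z : ℝ × ℝ, N z ≤ (N (1, 0) + N (0, 1)) * ‖z‖ := by
    intro z
    have hz : z = z.1 • ((1:ℝ), (0:ℝ)) + z.2 • ((0:ℝ), (1:ℝ)) := by
      apply Prod.ext <;> simp
    have h1 : N z ≤ N (z.1 • ((1:ℝ), (0:ℝ))) + N (z.2 • ((0:ℝ), (1:ℝ))) := by
      nth_rewrite 1 [hz]; exact hNadd _ _
    rw [hNhom, hNhom] at h1
    have h2 : |z.1| ≤ ‖z‖ := by simpa [Real.norm_eq_abs] using norm_fst_le z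
    have h3 : |z.2| ≤ ‖z‖ := by simpa [Real.norm_eq_abs] using norm_snd_le z
    have h4 := hNnonneg ((1:ℝ), (0:ℝ))
    have h5 := hNnonneg ((0:ℝ), (1:ℝ))
    nlinarith [abs_nonneg z.1, abs_nonneg z.2]
  set K := N (1, 0) + N (0, 1) with hKdef
  have hKpos : 0 < K := by
    have h1 : ((1:ℝ), (0:ℝ)) ≠ (0 : ℝ × ℝ) := by
      intro h; exact one_ne_zero (congrArg Prod.fst h)
    have := hNpos _ h1
    have := hNnonneg ((0:ℝ), (1:ℝ))
    rw [hKdef]; linarith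
  have hNlip : ∀ x y : ℝ × ℝ, |N x - N y| ≤ K * ‖x - y‖ := by
    intro x y
    have h1 : N x ≤ N (x - y) + N y := by
      have h := hNadd (x - y) y
      have e : x - y + y = x := by abel
      rw [e] at h; exact h
    have h2 : N y ≤ N (x - y) + N x := by
      have h := hNadd (y - x) x
      have e : y - x + x = y := by abel
      rw [e] at h
      have e2 : N (y - x) = N (x - y) := by rw [← hNneg (x - y), neg_sub]
      rw [e2] at h; exact h
    have h3 := hKub0 (x - y)
    rw [abs_le]; constructor <;> linarith
  have hNcont : Continuous N := by
    have hl : LipschitzWith (Real.toNNReal K) N := by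
      apply LipschitzWith.of_dist_le_mul
      intro x y
      rw [Real.dist_eq, dist_eq_norm, Real.coe_toNNReal K (le_of_lt hKpos)]
      exact hNlip x y
    exact hl.continuous
  obtain ⟨x₀, hx₀s, hx₀min⟩ := (isCompact_sphere (0 : ℝ × ℝ) 1).exists_isMinOn
    ⟨((1:ℝ), (0:ℝ)), by simp [Prod.norm_def]⟩ hNcont.continuousOn
  set m := N x₀ with hmdef
  have hmpos : 0 < m := by
    apply hNpos
    intro h
    rw [h] at hx₀s
    simp at hx₀s
  have hlow : ∀ z : ℝ × ℝ, m * ‖z‖ ≤ N z := by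
    intro z
    rcases eq_or_ne z 0 with rfl | hz
    · simp [hNzero]
    · have hzn : 0 < ‖z‖ := norm_pos_iff.mpr hz
      have hmem : ‖z‖⁻¹ • z ∈ Metric.sphere (0 : ℝ × ℝ) 1 := by
        simp [norm_smul, abs_of_pos (inv_pos.mpr hzn), inv_mul_cancel₀ (ne_of_gt hzn)]
      have h : N x₀ ≤ N (‖z‖⁻¹ • z) := hx₀min hmem
      rw [hNhom, abs_of_pos (inv_pos.mpr hzn)] at h
      have h2 : m * ‖z‖ ≤ (‖z‖⁻¹ * N z) * ‖z‖ := by nlinarith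
      calc m * ‖z‖ ≤ (‖z‖⁻¹ * N z) * ‖z‖ := h2
        _ = N z := by field_simp
  set m0 := m / 2 with hm0def
  have hm0pos : 0 < m0 := by rw [hm0def]; linarith
  have hNu_low : ∀ φ : ℝ, m0 ≤ N (Real.cos φ, Real.sin φ) := by
    intro φ
    have h1 := half_le_norm_circ φ
    have h2 := hlow ((Real.cos φ, Real.sin φ) : ℝ × ℝ)
    nlinarith
  have hulip : ∀ x y : ℝ, ‖((Real.cos x, Real.sin x) : ℝ × ℝ) - (Real.cos y, Real.sin y)‖ ≤ |x - y| := circ_lip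
  have hub1 : ∀ φ : ℝ, ‖((Real.cos φ, Real.sin φ) : ℝ × ℝ)‖ ≤ 1 := circ_norm_le_one
  set L := m0⁻¹ + K * m0⁻¹ ^ 2 with hLdef
  have hLpos : 0 < L := by
    have := inv_pos.mpr hm0pos
    rw [hLdef]
    nlinarith
  have hsLip : ∀ x y : ℝ, ‖s x - s y‖ ≤ L * |x - y| := by
    intro x y
    rw [hs x, hs y]
    set ux : ℝ × ℝ := (Real.cos x, Real.sin x) with hux
    set uy : ℝ × ℝ := (Real.cos y, Real.sin y) with huy
    set ax := (N ux)⁻¹ with hax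
    set ay := (N uy)⁻¹ with hay
    have haxpos : 0 < ax := inv_pos.mpr (hNu x)
    have haypos : 0 < ay := inv_pos.mpr (hNu y)
    have haxle : ax ≤ m0⁻¹ := by
      rw [hax]
      exact inv_anti₀ hm0pos (hNu_low x)
    have hayle : ay ≤ m0⁻¹ := by
      rw [hay]
      exact inv_anti₀ hm0pos (hNu_low y)
    have key : ax • ux - ay • uy = ax • (ux - uy) + (ax - ay) • uy := by
      apply Prod.ext <;> (simp only [Prod.fst_sub, Prod.snd_sub, Prod.fst_add, Prod.snd_add,
        Prod.smul_fst, Prod.smul_snd, smul_eq_mul]; ring)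
    rw [key]
    have hdiff : |ax - ay| ≤ K * |x - y| * m0⁻¹ ^ 2 := by
      have he : ax - ay = (N uy - N ux) * (ax * ay) := by
        have hnx : N ux ≠ 0 := ne_of_gt (hNu x)
        have hny : N uy ≠ 0 := ne_of_gt (hNu y)
        rw [hax, hay]
        field_simp
      rw [he, abs_mul]
      have h1 : |N uy - N ux| ≤ K * |x - y| := by
        have := hNlip uy ux
        have h2 : ‖uy - ux‖ ≤ |y - x| := hulip y x
        have h3 : |y - x| = |x - y| := abs_sub_comm y x
        nlinarith [norm_nonneg (uy - ux)]
      have h4 : |ax * ay| = ax * ay := abs_of_pos (mul_pos haxpos haypos)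
      have h5 : ax * ay ≤ m0⁻¹ ^ 2 := by nlinarith
      have h6 : (0:ℝ) ≤ K * |x - y| := by positivity
      rw [h4]
      exact mul_le_mul h1 h5 (le_of_lt (mul_pos haxpos haypos)) h6
    calc ‖ax • (ux - uy) + (ax - ay) • uy‖
        ≤ ‖ax • (ux - uy)‖ + ‖(ax - ay) • uy‖ := norm_add_le _ _
      _ = |ax| * ‖ux - uy‖ + |ax - ay| * ‖uy‖ := by
          rw [norm_smul, norm_smul, Real.norm_eq_abs, Real.norm_eq_abs]
      _ ≤ m0⁻¹ * |x - y| + (K * |x - y| * m0⁻¹ ^ 2) * 1 := by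
          have h7 : |ax| = ax := abs_of_pos haxpos
          have h8 := hulip x y
          have h9 := hub1 y
          have h10 : |ax| * ‖ux - uy‖ ≤ m0⁻¹ * |x - y| := by
            rw [h7]
            nlinarith [norm_nonneg (ux - uy), abs_nonneg (x - y)]
          have h11 : |ax - ay| * ‖uy‖ ≤ (K * |x - y| * m0⁻¹ ^ 2) * 1 := by
            nlinarith [norm_nonneg uy, abs_nonneg (ax - ay)]
          linarith
      _ = L * |x - y| := by rw [hLdef]; ring
  -- choose δ
  intro ε hε
  set δ := min 1 (ε / (6 * π * L ^ 2 + 1)) with hδdef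
  have hδ2pos : 0 < ε / (6 * π * L ^ 2 + 1) := by positivity
  have hδpos : 0 < δ := lt_min one_pos hδ2pos
  have hδ1 : δ ≤ 1 := min_le_left _ _
  have hδε : δ ≤ ε / (6 * π * L ^ 2 + 1) := min_le_right _ _
  refine ⟨δ, hδpos, ?_⟩
  intro n t τ hn ht0 htn hpart
  have hπ1 : (1:ℝ) < π := by linarith only [Real.pi_gt_three]
  -- monotonicity of the partition
  have hmono_t : ∀ j, j ≤ n → ∀ i, i ≤ j → t i ≤ t j := by
    intro j
    induction j with
    | zero =>
      intro _ i hi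
      have : i = 0 := Nat.le_zero.mp hi
      rw [this]
    | succ j ih =>
      intro hj i hi
      rcases Nat.lt_or_ge i (j + 1) with h | h
      · have h1 : t i ≤ t j := ih (by omega) i (by omega)
        have h2 : t j ≤ t (j + 1) := (hpart j (by omega)).2.2.1
        linarith only [h1, h2]
      · have : i = j + 1 := by omega
        rw [this]
  have htmem : ∀ i, i ≤ n → α ≤ t i ∧ t i ≤ β := by
    intro i hi
    constructor
    · rw [← ht0]; exact hmono_t i hi 0 (Nat.zero_le _)
    · rw [← htn]; exact hmono_t n (le_refl n) i hi
  have hIccsub : ∀ x : ℝ, α ≤ x → x ≤ β → x ∈ Icc (0:ℝ) (2 * π) := by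
    intro x h1 h2
    exact ⟨le_trans hα h1, le_trans h2 hβ⟩
  set c := 2 * (L * δ) * L with hcdef2
  have hcpos : 0 < c := by positivity
  -- per-interval estimate
  have hper : ∀ i ∈ Finset.range n,
      |wedge (s (τ i)) (sperp (t (i + 1)) - sperp (t i)) -
        (wedge (s (t (i + 1))) (sperp (t (i + 1))) - wedge (s (t i)) (sperp (t i)))| ≤
      c * (A (t (i + 1)) - A (t i)) := by
    intro i hi
    rw [Finset.mem_range] at hi
    obtain ⟨hτ1, hτ2, htt, hdδ⟩ := hpart i hi
    obtain ⟨hm0i, hm1i⟩ := htmem i (le_of_lt hi)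
    obtain ⟨hm0i1, hm1i1⟩ := htmem (i + 1) hi
    have hmτ1 : α ≤ τ i := le_trans hm0i hτ1
    have hmτ2 : τ i ≤ β := le_trans hτ2 hm1i1
    have hIo : t i ∈ Icc (0:ℝ) (2 * π) := hIccsub _ hm0i hm1i
    have hI1 : t (i + 1) ∈ Icc (0:ℝ) (2 * π) := hIccsub _ hm0i1 hm1i1
    have hIτ : τ i ∈ Icc (0:ℝ) (2 * π) := hIccsub _ hmτ1 hmτ2
    obtain ⟨hA1o, hA2o, hA3o⟩ := hA (t i) hIo
    obtain ⟨hA11, hA21, hA31⟩ := hA (t (i + 1)) hI1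
    obtain ⟨hA1τ, hA2τ, hA3τ⟩ := hA (τ i) hIτ
    have hAm1 : A (τ i) ≤ A (t (i + 1)) :=
      hmono _ _ hIτ hI1 hτ2 (by linarith only [hτ1, hdδ, hδ1, hπ1])
    have hAm0 : A (t i) ≤ A (τ i) :=
      hmono _ _ hIo hIτ hτ1 (by linarith only [hτ2, hdδ, hδ1, hπ1])
    -- support inequalities
    have hsupτ1 := hsup (t (i + 1)) hI1 (s (τ i))
    rw [hs1, one_mul] at hsupτ1
    have hsupτ0 := hsup (t i) hIo (s (τ i))
    rw [hs1, one_mul] at hsupτ0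
    have hsup1τ := hsup (τ i) hIτ (s (t (i + 1)))
    rw [hs1, one_mul] at hsup1τ
    have hsup0τ := hsup (τ i) hIτ (s (t i))
    rw [hs1, one_mul] at hsup0τ
    -- expansions
    have hX'exp : wedge (s (t (i + 1)) - s (τ i)) (sperp (t (i + 1)) - sperp (τ i)) =
        wedge (s (t (i + 1))) (sperp (t (i + 1))) - wedge (s (t (i + 1))) (sperp (τ i)) -
        wedge (s (τ i)) (sperp (t (i + 1))) + wedge (s (τ i)) (sperp (τ i)) := by
      simp only [wedge, Prod.fst_sub, Prod.snd_sub]; ring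
    have hY'exp : wedge (s (t i) - s (τ i)) (sperp (t i) - sperp (τ i)) =
        wedge (s (t i)) (sperp (t i)) - wedge (s (t i)) (sperp (τ i)) -
        wedge (s (τ i)) (sperp (t i)) + wedge (s (τ i)) (sperp (τ i)) := by
      simp only [wedge, Prod.fst_sub, Prod.snd_sub]; ring
    -- norm bounds
    have hn1 : ‖s (t (i + 1)) - s (τ i)‖ ≤ L * δ := by
      have h := hsLip (t (i + 1)) (τ i)
      have habs : |t (i + 1) - τ i| ≤ δ := by
        rw [abs_of_nonneg (by linarith only [hτ2])]; linarith only [hτ1, hdδ]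
      have h2 : L * |t (i + 1) - τ i| ≤ L * δ :=
        mul_le_mul_of_nonneg_left habs (le_of_lt hLpos)
      linarith only [h, h2]
    have hn2 : ‖sperp (t (i + 1)) - sperp (τ i)‖ ≤ L * (A (t (i + 1)) - A (τ i)) := by
      rw [hA31, hA3τ]
      have h := hsLip (A (t (i + 1))) (A (τ i))
      rw [abs_of_nonneg (by linarith only [hAm1])] at h
      exact h
    have hn3 : ‖s (t i) - s (τ i)‖ ≤ L * δ := by
      have h := hsLip (t i) (τ i)
      have habs : |t i - τ i| ≤ δ := by
        rw [abs_of_nonpos (by linarith only [hτ1])]; linarith only [hτ2, hdδ]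
      have h2 : L * |t i - τ i| ≤ L * δ :=
        mul_le_mul_of_nonneg_left habs (le_of_lt hLpos)
      linarith only [h, h2]
    have hn4 : ‖sperp (t i) - sperp (τ i)‖ ≤ L * (A (τ i) - A (t i)) := by
      rw [hA3o, hA3τ]
      have h := hsLip (A (t i)) (A (τ i))
      rw [abs_of_nonpos (by linarith only [hAm0])] at h
      linarith only [h]
    set X' := wedge (s (t (i + 1)) - s (τ i)) (sperp (t (i + 1)) - sperp (τ i)) with hXdef
    set Y' := wedge (s (t i) - s (τ i)) (sperp (t i) - sperp (τ i)) with hYdef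
    set d1 := c * (A (t (i + 1)) - A (τ i)) with hd1def
    set d0 := c * (A (τ i) - A (t i)) with hd0def
    have hXb : X' ≤ d1 := by
      have h := abs_wedge_le (s (t (i + 1)) - s (τ i)) (sperp (t (i + 1)) - sperp (τ i))
      have h2 : ‖s (t (i + 1)) - s (τ i)‖ * ‖sperp (t (i + 1)) - sperp (τ i)‖ ≤
          (L * δ) * (L * (A (t (i + 1)) - A (τ i))) :=
        mul_le_mul hn1 hn2 (norm_nonneg _) (by positivity)
      have h3 := le_abs_self X'
      have h4 : d1 = 2 * ((L * δ) * (L * (A (t (i + 1)) - A (τ i)))) := by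
        rw [hd1def, hcdef2]; ring
      rw [h4]
      rw [← hXdef] at h
      linarith only [h, h2, h3]
    have hYb : Y' ≤ d0 := by
      have h := abs_wedge_le (s (t i) - s (τ i)) (sperp (t i) - sperp (τ i))
      have h2 : ‖s (t i) - s (τ i)‖ * ‖sperp (t i) - sperp (τ i)‖ ≤
          (L * δ) * (L * (A (τ i) - A (t i))) :=
        mul_le_mul hn3 hn4 (norm_nonneg _) (by positivity)
      have h3 := le_abs_self Y'
      have h4 : d0 = 2 * ((L * δ) * (L * (A (τ i) - A (t i)))) := by
        rw [hd0def, hcdef2]; ring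
      rw [h4]
      rw [← hYdef] at h
      linarith only [h, h2, h3]
    set w1 := wedge (s (t (i + 1))) (sperp (t (i + 1))) with hw1def
    set w0 := wedge (s (t i)) (sperp (t i)) with hw0def
    set wτ := wedge (s (τ i)) (sperp (τ i)) with hwτdef
    set a1 := wedge (s (τ i)) (sperp (t (i + 1))) with ha1def
    set a0 := wedge (s (τ i)) (sperp (t i)) with ha0def
    set b1 := wedge (s (t (i + 1))) (sperp (τ i)) with hb1def
    set b0 := wedge (s (t i)) (sperp (τ i)) with hb0def
    have hXnn : 0 ≤ w1 - a1 := by linarith only [hsupτ1]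
    have hYnn : 0 ≤ w0 - a0 := by linarith only [hsupτ0]
    have hXup : w1 - a1 ≤ X' := by rw [hX'exp]; linarith only [hsup1τ]
    have hYup : w0 - a0 ≤ Y' := by rw [hY'exp]; linarith only [hsup0τ]
    have hd1nn : 0 ≤ d1 := by linarith only [hXb, hXup, hXnn]
    have hd0nn : 0 ≤ d0 := by linarith only [hYb, hYup, hYnn]
    have heq : wedge (s (τ i)) (sperp (t (i + 1)) - sperp (t i)) - (w1 - w0) =
        -(w1 - a1) + (w0 - a0) := by
      rw [hw1def, hw0def, ha1def, ha0def]
      simp only [wedge, Prod.fst_sub, Prod.snd_sub]; ring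
    rw [heq, abs_le]
    have hsplit : c * (A (t (i + 1)) - A (t i)) = d1 + d0 := by
      rw [hd1def, hd0def]; ring
    rw [hsplit]
    constructor
    · linarith only [hXup, hXb, hYnn, hd0nn]
    · linarith only [hXnn, hYup, hYb, hd1nn]
  -- assemble
  rw [← ht0, ← htn]
  have htel : ∑ i ∈ Finset.range n,
      (wedge (s (t (i + 1))) (sperp (t (i + 1))) - wedge (s (t i)) (sperp (t i))) =
      wedge (s (t n)) (sperp (t n)) - wedge (s (t 0)) (sperp (t 0)) :=
    Finset.sum_range_sub (fun i => wedge (s (t i)) (sperp (t i))) n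
  rw [← htel, ← Finset.sum_sub_distrib]
  have hstep1 := Finset.abs_sum_le_sum_abs
    (fun i => wedge (s (τ i)) (sperp (t (i + 1)) - sperp (t i)) -
      (wedge (s (t (i + 1))) (sperp (t (i + 1))) - wedge (s (t i)) (sperp (t i))))
    (Finset.range n)
  have hstep2 := Finset.sum_le_sum hper
  have hstep3 : ∑ i ∈ Finset.range n, c * (A (t (i + 1)) - A (t i)) =
      c * (A (t n) - A (t 0)) := by
    rw [← Finset.mul_sum, Finset.sum_range_sub (fun i => A (t i))]
  obtain ⟨hAn1, hAn2, _⟩ := hA (t n) (hIccsub _ (htmem n (le_refl n)).1 (htmem n (le_refl n)).2)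
  obtain ⟨hA01, hA02, _⟩ := hA (t 0) (hIccsub _ (htmem 0 (Nat.zero_le n)).1 (htmem 0 (Nat.zero_le n)).2)
  have h3π : A (t n) - A (t 0) ≤ 3 * π := by
    have h1 : t n ≤ 2 * π := le_trans (htmem n (le_refl n)).2 hβ
    have h2 : 0 ≤ t 0 := le_trans hα (htmem 0 (Nat.zero_le n)).1
    linarith only [h1, h2, hAn2, hA01]
  have hfin : c * (A (t n) - A (t 0)) ≤ c * (3 * π) :=
    mul_le_mul_of_nonneg_left h3π (le_of_lt hcpos)
  have hlast : c * (3 * π) < ε := by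
    have hD : (0:ℝ) < 6 * π * L ^ 2 + 1 := by positivity
    have he1 : c * (3 * π) = (6 * π * L ^ 2) * δ := by rw [hcdef2]; ring
    have he2 : (6 * π * L ^ 2) * δ ≤ (6 * π * L ^ 2) * (ε / (6 * π * L ^ 2 + 1)) := by
      apply mul_le_mul_of_nonneg_left hδε (by positivity)
    have he3 : (6 * π * L ^ 2) * (ε / (6 * π * L ^ 2 + 1)) < ε := by
      rw [mul_div_assoc', div_lt_iff₀ hD]
      have hLL : (0:ℝ) < 6 * π * L ^ 2 := by positivity
      nlinarith [hε, hLL]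
    rw [he1]
    exact lt_of_le_of_lt he2 he3
  calc |∑ i ∈ Finset.range n, (wedge (s (τ i)) (sperp (t (i + 1)) - sperp (t i)) -
      (wedge (s (t (i + 1))) (sperp (t (i + 1))) - wedge (s (t i)) (sperp (t i))))|
      ≤ ∑ i ∈ Finset.range n, |wedge (s (τ i)) (sperp (t (i + 1)) - sperp (t i)) -
        (wedge (s (t (i + 1))) (sperp (t (i + 1))) - wedge (s (t i)) (sperp (t i)))| := hstep1
    _ ≤ ∑ i ∈ Finset.range n, c * (A (t (i + 1)) - A (t i)) := hstep2
    _ = c * (A (t n) - A (t 0)) := hstep3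
    _ ≤ c * (3 * π) := hfin
    _ < ε := hlast
end
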